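/- arXiv:1309.2567 — 3 statements merged into one kernel-verified Lean document; each statement's English description precedes it below -/
import Mathlib

section
/- For each k ∈ ℤ, the family of standard monomials {z_k[a1,a2] : (a1,a2) ∈ ℤ²} is a basis of A(P1,P2) as an underline-K-module: it is underline-K-linearly independent and spans A(P1,P2). -/
open Polynomial
noncomputable section

namespace GCA

/-- The ambient field of rational functions in two variables over `K`. -/
abbrev F (K : Type*) [Field K] := FractionRing (MvPolynomial (Fin 2) K)

/-- The canonical embedding of `K` into `F K`. -/
def φ (K : Type*) [Field K] : K →+* F K :=
  (algebraMap (MvPolynomial (Fin 2) K) (F K)).comp (MvPolynomial.C)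

/-- The two variables `x1, x2` in `F K`. -/
def Xv (K : Type*) [Field K] (i : Fin 2) : F K :=
  algebraMap (MvPolynomial (Fin 2) K) (F K) (MvPolynomial.X i)

/-- A polynomial of degree `d` is palindromic if `P(z) = z^d P(1/z)`. -/
def Palindromic {K : Type*} [Field K] (P : K[X]) : Prop :=
  ∀ t ≤ P.natDegree, P.coeff t = P.coeff (P.natDegree - t)

/-- `x : ℤ → F K` is the sequence of cluster variables for the exchange
polynomials `P1, P2`. -/
def ClusterSeq {K : Type*} [Field K] (P1 P2 : K[X]) (x : ℤ → F K) : Prop :=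
  x 1 = Xv K 0 ∧ x 2 = Xv K 1 ∧ (∀ k, x k ≠ 0) ∧
    ∀ k : ℤ, x (k + 1) * x (k - 1) =
      if Even k then Polynomial.eval₂ (φ K) (x k) P1 else Polynomial.eval₂ (φ K) (x k) P2

/-- `underline-K`: the ℤ-subalgebra (subring) of `K` generated by the coefficients
of `P1` and `P2`. -/
def uK {K : Type*} [Field K] (P1 P2 : K[X]) : Subring K :=
  Subring.closure (Set.range P1.coeff ∪ Set.range P2.coeff)

/-- The generalized cluster algebra `A(P1,P2)`: the `uK`-subalgebra of `F K`
generated by the cluster variables, as a subring of `F K`. -/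
def clA {K : Type*} [Field K] (P1 P2 : K[X]) (x : ℤ → F K) : Subring (F K) :=
  Subring.closure (φ K '' (uK P1 P2 : Set K) ∪ Set.range x)

/-- The Laurent polynomial ring `T k` in the cluster `{x k, x (k+1)}`. -/
def clT {K : Type*} [Field K] (P1 P2 : K[X]) (x : ℤ → F K) (k : ℤ) : Subring (F K) :=
  Subring.closure (φ K '' (uK P1 P2 : Set K) ∪ {x k, (x k)⁻¹, x (k + 1), (x (k + 1))⁻¹})

/-- The standard monomial `z_k[a1,a2]`. -/
def zmon {K : Type*} [Field K] (x : ℤ → F K) (k a1 a2 : ℤ) : F K :=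
  x (k - 1) ^ (max a2 0).toNat * x k ^ (max (-a1) 0).toNat *
    x (k + 1) ^ (max (-a2) 0).toNat * x (k + 2) ^ (max a1 0).toNat

/-- `y` is pointed at `(a1, a2)` with coefficient function `c`. -/
def PointedAt {K : Type*} [Field K] (P1 P2 : K[X]) (x : ℤ → F K) (a1 a2 : ℤ)
    (c : ℕ × ℕ →₀ K) (y : F K) : Prop :=
  (∀ m, c m ∈ uK P1 P2) ∧ c (0, 0) = 1 ∧
    y = x 1 ^ (-a1) * x 2 ^ (-a2) *
      ∑ m ∈ c.support, φ K (c m) * x 1 ^ m.1 * x 2 ^ m.2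
section Dev

variable {K : Type*} [Field K]

/-- The exchange polynomial used at index `j`. -/
def Qp (P1 P2 : K[X]) (j : ℤ) : K[X] := if Even j then P1 else P2

lemma Qp_add_two (P1 P2 : K[X]) (j : ℤ) : Qp P1 P2 (j + 2) = Qp P1 P2 j := by
  unfold Qp
  have : Even (j + 2) ↔ Even j := by
    constructor <;> intro h
    · simpa using h.sub (even_two (α := ℤ))
    · exact h.add even_two
  simp [this]

lemma Qp_monic {P1 P2 : K[X]} (hm1 : P1.Monic) (hm2 : P2.Monic) (j : ℤ) :
    (Qp P1 P2 j).Monic := by unfold Qp; split <;> assumption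

lemma Qp_palin {P1 P2 : K[X]} (hp1 : Palindromic P1) (hp2 : Palindromic P2) (j : ℤ) :
    Palindromic (Qp P1 P2 j) := by unfold Qp; split <;> assumption

lemma Qp_coeff_mem (P1 P2 : K[X]) (j : ℤ) (t : ℕ) :
    (Qp P1 P2 j).coeff t ∈ uK P1 P2 := by
  apply Subring.subset_closure
  unfold Qp; split
  · exact Or.inl ⟨t, rfl⟩
  · exact Or.inr ⟨t, rfl⟩

lemma Qp_coeff_zero {P1 P2 : K[X]} (hm1 : P1.Monic) (hm2 : P2.Monic)
    (hp1 : Palindromic P1) (hp2 : Palindromic P2) (j : ℤ) :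
    (Qp P1 P2 j).coeff 0 = 1 := by
  have hp := Qp_palin hp1 hp2 (P1 := P1) (P2 := P2) j
  have hm := Qp_monic hm1 hm2 (P1 := P1) (P2 := P2) j
  have := hp 0 (Nat.zero_le _)
  simpa [this] using hm.coeff_natDegree

lemma cluster_rel {P1 P2 : K[X]} {x : ℤ → F K} (hx : ClusterSeq P1 P2 x) (j : ℤ) :
    x (j + 1) * x (j - 1) = (Qp P1 P2 j).eval₂ (φ K) (x j) := by
  have := hx.2.2.2 j
  unfold Qp
  split <;> simp_all

lemma cluster_ne {P1 P2 : K[X]} {x : ℤ → F K} (hx : ClusterSeq P1 P2 x) (j : ℤ) :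
    x j ≠ 0 := hx.2.2.1 j

end Dev
section Dev2

variable {K : Type*} [Field K]

/-- Finite `uK`-linear combinations of standard monomials in cluster `k`. -/
def SpanSet (P1 P2 : K[X]) (x : ℤ → F K) (k : ℤ) : Set (F K) :=
  {y | ∃ (s : Finset (ℤ × ℤ)) (c : ℤ × ℤ → K), (∀ m, c m ∈ uK P1 P2) ∧
    (∀ m ∉ s, c m = 0) ∧ y = ∑ m ∈ s, φ K (c m) * zmon x k m.1 m.2}

variable {P1 P2 : K[X]} {x : ℤ → F K} {k : ℤ}

lemma SpanSet.zero : (0 : F K) ∈ SpanSet P1 P2 x k :=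
  ⟨∅, 0, fun _ => Subring.zero_mem _, fun _ _ => rfl, by simp⟩

lemma SpanSet.smul_zmon {r : K} (hr : r ∈ uK P1 P2) (a1 a2 : ℤ) :
    φ K r * zmon x k a1 a2 ∈ SpanSet P1 P2 x k := by
  refine ⟨{(a1, a2)}, fun m => if m = (a1, a2) then r else 0, ?_, ?_, ?_⟩
  · intro m
    by_cases hm : m = (a1, a2) <;> simp [hm, hr, Subring.zero_mem]
  · intro m hm; simp at hm; simp [hm]
  · simp

lemma SpanSet.zmon_mem (a1 a2 : ℤ) : zmon x k a1 a2 ∈ SpanSet P1 P2 x k := by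
  simpa using SpanSet.smul_zmon (Subring.one_mem (uK P1 P2)) a1 a2

lemma SpanSet.add {y y' : F K} (h : y ∈ SpanSet P1 P2 x k) (h' : y' ∈ SpanSet P1 P2 x k) :
    y + y' ∈ SpanSet P1 P2 x k := by
  obtain ⟨s, c, hc, hc0, rfl⟩ := h
  obtain ⟨s', c', hc', hc0', rfl⟩ := h'
  refine ⟨s ∪ s', c + c', fun m => Subring.add_mem _ (hc m) (hc' m), ?_, ?_⟩
  · intro m hm
    simp only [Finset.mem_union, not_or] at hm
    simp [Pi.add_apply, hc0 m hm.1, hc0' m hm.2]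
  · have e1 : ∑ m ∈ s, φ K (c m) * zmon x k m.1 m.2
        = ∑ m ∈ s ∪ s', φ K (c m) * zmon x k m.1 m.2 := by
      apply Finset.sum_subset (Finset.subset_union_left)
      intro m _ hm; simp [hc0 m hm]
    have e2 : ∑ m ∈ s', φ K (c' m) * zmon x k m.1 m.2
        = ∑ m ∈ s ∪ s', φ K (c' m) * zmon x k m.1 m.2 := by
      apply Finset.sum_subset (Finset.subset_union_right)
      intro m _ hm; simp [hc0' m hm]
    rw [e1, e2, ← Finset.sum_add_distrib]
    apply Finset.sum_congr rfl
    intro m _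
    simp [(φ K).map_add, add_mul]

lemma SpanSet.smul {r : K} (hr : r ∈ uK P1 P2) {y : F K} (h : y ∈ SpanSet P1 P2 x k) :
    φ K r * y ∈ SpanSet P1 P2 x k := by
  obtain ⟨s, c, hc, hc0, rfl⟩ := h
  refine ⟨s, fun m => r * c m, fun m => Subring.mul_mem _ hr (hc m),
    fun m hm => by simp [hc0 m hm], ?_⟩
  rw [Finset.mul_sum]
  apply Finset.sum_congr rfl
  intro m _
  simp [(φ K).map_mul, mul_assoc]

lemma SpanSet.neg {y : F K} (h : y ∈ SpanSet P1 P2 x k) : -y ∈ SpanSet P1 P2 x k := by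
  have := SpanSet.smul (r := -1) (Subring.neg_mem _ (Subring.one_mem _)) h
  simpa using this

lemma SpanSet.sum {ι : Type*} (t : Finset ι) (f : ι → F K)
    (hf : ∀ i ∈ t, f i ∈ SpanSet P1 P2 x k) : ∑ i ∈ t, f i ∈ SpanSet P1 P2 x k := by
  classical
  induction t using Finset.induction_on with
  | empty => simpa using SpanSet.zero
  | insert _ _ hnotmem ih =>
    rename_i a t'
    rw [Finset.sum_insert hnotmem]
    exact SpanSet.add (hf a (Finset.mem_insert_self a t'))
      (ih fun i hi => hf i (Finset.mem_insert_of_mem hi))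

lemma SpanSet.one : (1 : F K) ∈ SpanSet P1 P2 x k := by
  have := SpanSet.zmon_mem (P1 := P1) (P2 := P2) (x := x) (k := k) 0 0
  simpa [zmon] using this

end Dev2
section Dev3

variable {K : Type*} [Field K]

/-- A monomial in the four consecutive cluster variables around cluster `k`. -/
def mon (x : ℤ → F K) (k : ℤ) (b0 b1 b2 b3 : ℕ) : F K :=
  x (k - 1) ^ b0 * x k ^ b1 * x (k + 1) ^ b2 * x (k + 2) ^ b3

variable {P1 P2 : K[X]} {x : ℤ → F K} {k : ℤ} {b0 b1 b2 b3 : ℕ}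

lemma mon_standard (h02 : b0 = 0 ∨ b2 = 0) (h13 : b1 = 0 ∨ b3 = 0) :
    mon x k b0 b1 b2 b3 = zmon x k ((b3 : ℤ) - b1) ((b0 : ℤ) - b2) := by
  unfold mon zmon
  have e0 : (max ((b0 : ℤ) - b2) 0).toNat = b0 - b2 := by omega
  have e1 : (max (-((b3 : ℤ) - b1)) 0).toNat = b1 - b3 := by omega
  have e2 : (max (-((b0 : ℤ) - b2)) 0).toNat = b2 - b0 := by omega
  have e3 : (max ((b3 : ℤ) - b1) 0).toNat = b3 - b1 := by omega
  rw [e0, e1, e2, e3]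
  rcases h02 with h | h <;> rcases h13 with h' | h' <;> subst h <;> subst h' <;> simp

lemma zmon_mul_zmon (a1 a2 a1' a2' : ℤ) :
    zmon x k a1 a2 * zmon x k a1' a2' =
      mon x k ((max a2 0).toNat + (max a2' 0).toNat)
        ((max (-a1) 0).toNat + (max (-a1') 0).toNat)
        ((max (-a2) 0).toNat + (max (-a2') 0).toNat)
        ((max a1 0).toNat + (max a1' 0).toNat) := by
  unfold zmon mon
  rw [pow_add, pow_add, pow_add, pow_add]; ring

lemma ev_expand (a : F K) (P : K[X]) :
    P.eval₂ (φ K) a = ∑ t ∈ Finset.range (P.natDegree + 1), φ K (P.coeff t) * a ^ t :=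
  Polynomial.eval₂_eq_sum_range _ _

lemma mon_mem (hx : ClusterSeq P1 P2 x) :
    ∀ n b0 b1 b2 b3, b0 + b3 ≤ n → mon x k b0 b1 b2 b3 ∈ SpanSet P1 P2 x k := by
  intro n
  induction n with
  | zero =>
    intro b0 b1 b2 b3 hb
    have h0 : b0 = 0 := by omega
    have h3 : b3 = 0 := by omega
    subst h0; subst h3
    rw [mon_standard (Or.inl rfl) (Or.inr rfl)]
    exact SpanSet.zmon_mem _ _
  | succ n ih =>
    intro b0 b1 b2 b3 hb
    by_cases h02 : 0 < b0 ∧ 0 < b2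
    · have key : mon x k b0 b1 b2 b3
          = mon x k (b0 - 1) b1 (b2 - 1) b3 * (x (k + 1) * x (k - 1)) := by
        unfold mon
        have e0 : b0 = (b0 - 1) + 1 := by omega
        have e2 : b2 = (b2 - 1) + 1 := by omega
        nth_rewrite 1 [e0, e2]
        rw [pow_succ, pow_succ]; ring
      rw [key, cluster_rel hx k, ev_expand, Finset.mul_sum]
      apply SpanSet.sum
      intro t _
      have e : mon x k (b0 - 1) b1 (b2 - 1) b3 * (φ K ((Qp P1 P2 k).coeff t) * x k ^ t)
          = φ K ((Qp P1 P2 k).coeff t) * mon x k (b0 - 1) (b1 + t) (b2 - 1) b3 := by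
        unfold mon; rw [pow_add]; ring
      rw [e]
      exact SpanSet.smul (Qp_coeff_mem P1 P2 k t) (ih _ _ _ _ (by omega))
    · by_cases h13 : 0 < b1 ∧ 0 < b3
      · have key : mon x k b0 b1 b2 b3
            = mon x k b0 (b1 - 1) b2 (b3 - 1) * (x (k + 1 + 1) * x (k + 1 - 1)) := by
          have i1 : k + 1 + 1 = k + 2 := by ring
          have i2 : k + 1 - 1 = k := by ring
          rw [i1, i2]
          unfold mon
          have e1 : b1 = (b1 - 1) + 1 := by omega
          have e3 : b3 = (b3 - 1) + 1 := by omega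
          nth_rewrite 1 [e1, e3]
          rw [pow_succ, pow_succ]; ring
        rw [key, cluster_rel hx (k + 1), ev_expand, Finset.mul_sum]
        apply SpanSet.sum
        intro s _
        have e : mon x k b0 (b1 - 1) b2 (b3 - 1)
              * (φ K ((Qp P1 P2 (k + 1)).coeff s) * x (k + 1) ^ s)
            = φ K ((Qp P1 P2 (k + 1)).coeff s) * mon x k b0 (b1 - 1) (b2 + s) (b3 - 1) := by
          unfold mon; rw [pow_add]; ring
        rw [e]
        exact SpanSet.smul (Qp_coeff_mem P1 P2 (k + 1) s) (ih _ _ _ _ (by omega))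
      · rw [mon_standard (by omega) (by omega)]
        exact SpanSet.zmon_mem _ _

lemma SpanSet.mul (hx : ClusterSeq P1 P2 x) {y y' : F K}
    (h : y ∈ SpanSet P1 P2 x k) (h' : y' ∈ SpanSet P1 P2 x k) :
    y * y' ∈ SpanSet P1 P2 x k := by
  obtain ⟨s, c, hc, hc0, rfl⟩ := h
  obtain ⟨s', c', hc', hc0', rfl⟩ := h'
  rw [Finset.sum_mul_sum]
  apply SpanSet.sum
  intro m _
  apply SpanSet.sum
  intro m' _
  have e : φ K (c m) * zmon x k m.1 m.2 * (φ K (c' m') * zmon x k m'.1 m'.2)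
      = φ K (c m * c' m') * (zmon x k m.1 m.2 * zmon x k m'.1 m'.2) := by
    rw [(φ K).map_mul]; ring
  rw [e, zmon_mul_zmon]
  exact SpanSet.smul (Subring.mul_mem _ (hc m) (hc' m'))
    (mon_mem hx _ _ _ _ _ le_rfl)

end Dev3
section Dev4

variable {K : Type*} [Field K] {P1 P2 : K[X]} {x : ℤ → F K} {k : ℤ}

lemma SpanSet.sub {y y' : F K} (h : y ∈ SpanSet P1 P2 x k) (h' : y' ∈ SpanSet P1 P2 x k) :
    y - y' ∈ SpanSet P1 P2 x k := by
  have := SpanSet.add h (SpanSet.neg h')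
  simpa [sub_eq_add_neg] using this

lemma SpanSet.pow (hx : ClusterSeq P1 P2 x) {y : F K} (h : y ∈ SpanSet P1 P2 x k) (n : ℕ) :
    y ^ n ∈ SpanSet P1 P2 x k := by
  induction n with
  | zero => simpa using SpanSet.one
  | succ n ih => rw [pow_succ]; exact SpanSet.mul hx ih h

lemma zmon_nn (t s : ℕ) : zmon x k (-(t : ℤ)) (-(s : ℤ)) = x k ^ t * x (k + 1) ^ s := by
  unfold zmon
  have e0 : (max (-(s : ℤ)) 0).toNat = 0 := by omega
  have e1 : (max (-(-(t : ℤ))) 0).toNat = t := by omega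
  have e2 : (max (-(-(s : ℤ))) 0).toNat = s := by omega
  have e3 : (max (-(t : ℤ)) 0).toNat = 0 := by omega
  rw [e0, e1, e2, e3]; simp

lemma zmon_pp (t s : ℕ) : zmon x k (t : ℤ) (s : ℤ) = x (k - 1) ^ s * x (k + 2) ^ t := by
  unfold zmon
  have e0 : (max ((s : ℤ)) 0).toNat = s := by omega
  have e1 : (max (-(t : ℤ)) 0).toNat = 0 := by omega
  have e2 : (max (-(s : ℤ)) 0).toNat = 0 := by omega
  have e3 : (max ((t : ℤ)) 0).toNat = t := by omega
  rw [e0, e1, e2, e3]; simp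

lemma SpanSet.ev_v {P : K[X]} (hP : ∀ t, P.coeff t ∈ uK P1 P2) :
    P.eval₂ (φ K) (x (k + 1)) ∈ SpanSet P1 P2 x k := by
  rw [ev_expand]
  apply SpanSet.sum
  intro s _
  have : x (k + 1) ^ s = zmon x k 0 (-(s : ℤ)) := by
    have := zmon_nn (x := x) (k := k) 0 s; simpa using this.symm
  rw [this]
  exact SpanSet.smul (hP s) (SpanSet.zmon_mem _ _)

lemma SpanSet.ev_u {P : K[X]} (hP : ∀ t, P.coeff t ∈ uK P1 P2) :
    P.eval₂ (φ K) (x k) ∈ SpanSet P1 P2 x k := by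
  rw [ev_expand]
  apply SpanSet.sum
  intro s _
  have : x k ^ s = zmon x k (-(s : ℤ)) 0 := by
    have := zmon_nn (x := x) (k := k) s 0; simpa using this.symm
  rw [this]
  exact SpanSet.smul (hP s) (SpanSet.zmon_mem _ _)

/-- The core identity exploiting palindromicity. -/
lemma core_identity (S : K[X]) (hpS : Palindromic S) (A B : F K) :
    (∑ t ∈ Finset.range (S.natDegree + 1), φ K (S.coeff t) * A ^ t) * B ^ S.natDegree
      - ∑ t ∈ Finset.range (S.natDegree + 1),
          φ K (S.coeff t) * ((B - 1) * (∑ i ∈ Finset.range (S.natDegree - t), B ^ i)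
            * (B ^ t * A ^ (S.natDegree - t)))
    = ∑ t ∈ Finset.range (S.natDegree + 1),
        φ K (S.coeff t) * (B ^ t * A ^ (S.natDegree - t)) := by
  set n := S.natDegree with hn
  have hrefl : ∑ t ∈ Finset.range (n + 1), φ K (S.coeff t) * A ^ (n - t)
      = ∑ t ∈ Finset.range (n + 1), φ K (S.coeff t) * A ^ t := by
    have h := Finset.sum_range_reflect (fun t => φ K (S.coeff t) * A ^ t) (n + 1)
    rw [← h]
    apply Finset.sum_congr rfl
    intro t ht
    have htle : t ≤ n := by
      have := Finset.mem_range.mp ht; omega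
    rw [show n + 1 - 1 - t = n - t from by omega, hpS t htle]
  have expand : ∀ t ∈ Finset.range (n + 1),
      φ K (S.coeff t) * ((B - 1) * (∑ i ∈ Finset.range (n - t), B ^ i)
        * (B ^ t * A ^ (n - t)))
      = φ K (S.coeff t) * (B ^ n * A ^ (n - t))
        - φ K (S.coeff t) * (B ^ t * A ^ (n - t)) := by
    intro t ht
    have htle : t ≤ n := by
      have := Finset.mem_range.mp ht; omega
    have geom : (B - 1) * (∑ i ∈ Finset.range (n - t), B ^ i) = B ^ (n - t) - 1 := by
      rw [mul_comm]; exact geom_sum_mul B (n - t)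
    have hpow : B ^ (n - t) * B ^ t = B ^ n := by
      rw [← pow_add]; congr 1; omega
    rw [geom, ← hpow]; ring
  rw [Finset.sum_congr rfl expand, Finset.sum_sub_distrib, ← hrefl, Finset.sum_mul]
  have : ∑ t ∈ Finset.range (n + 1), φ K (S.coeff t) * A ^ (n - t) * B ^ n
      = ∑ t ∈ Finset.range (n + 1), φ K (S.coeff t) * (B ^ n * A ^ (n - t)) := by
    apply Finset.sum_congr rfl; intro t _; ring
  rw [this]; ring

end Dev4
section Dev5

variable {K : Type*} [Field K] {P1 P2 : K[X]} {x : ℤ → F K} {k : ℤ}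

lemma shift_up (hm1 : P1.Monic) (hm2 : P2.Monic) (hp1 : Palindromic P1)
    (hp2 : Palindromic P2) (hx : ClusterSeq P1 P2 x) :
    x (k + 3) ∈ SpanSet P1 P2 x k := by
  classical
  set Q := Qp P1 P2 k with hQ
  set R := Qp P1 P2 (k + 1) with hR
  set d := Q.natDegree with hd
  set u := x k with hu
  set v := x (k + 1) with hv
  set w := x (k + 2) with hw
  set Rt : F K := R.eval₂ (φ K) v with hRt
  set Tt : F K := (R.divX).eval₂ (φ K) v with hTt
  have Fu : u * w = Rt := by
    have h := cluster_rel hx (k + 1)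
    rw [show k + 1 + 1 = k + 2 from by ring, show k + 1 - 1 = k from by ring] at h
    rw [← hv, ← hw, ← hu, ← hR, ← hRt] at h
    rw [← h]; ring
  have Fw : v * x (k + 3) = Q.eval₂ (φ K) w := by
    have h := cluster_rel hx (k + 2)
    rw [show k + 2 + 1 = k + 3 from by ring, show k + 2 - 1 = k + 1 from by ring,
      Qp_add_two] at h
    rw [← hv, ← hw, ← hQ] at h
    rw [← h]; ring
  have Fv : v * x (k - 1) = Q.eval₂ (φ K) u := by
    have h := cluster_rel hx k
    rw [← h]
  have FT : v * Tt = Rt - 1 := by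
    have h0 : R.coeff 0 = 1 := Qp_coeff_zero hm1 hm2 hp1 hp2 (k + 1)
    have h2 := congrArg (Polynomial.eval₂ (φ K) v) (Polynomial.X_mul_divX_add (p := R))
    simp only [Polynomial.eval₂_add, Polynomial.eval₂_mul, Polynomial.eval₂_X,
      Polynomial.eval₂_C, h0, (φ K).map_one] at h2
    rw [← hTt, ← hRt] at h2
    rw [← h2]; ring
  -- the right-hand side, manifestly in the span
  set RHS : F K := zmon x k d 1
    - ∑ t ∈ Finset.range (d + 1), φ K (Q.coeff t)
        * (zmon x k t 0 * (Tt * ∑ i ∈ Finset.range (d - t), Rt ^ i)) with hRHS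
  have hmem : RHS ∈ SpanSet P1 P2 x k := by
    apply SpanSet.sub (SpanSet.zmon_mem _ _)
    apply SpanSet.sum
    intro t _
    apply SpanSet.smul (Qp_coeff_mem P1 P2 k t)
    apply SpanSet.mul hx (SpanSet.zmon_mem _ _)
    apply SpanSet.mul hx
    · exact SpanSet.ev_v fun s => by
        rw [Polynomial.coeff_divX]; exact Qp_coeff_mem P1 P2 (k + 1) _
    · exact SpanSet.sum _ _ fun i _ =>
        SpanSet.pow hx (SpanSet.ev_v fun s => Qp_coeff_mem P1 P2 (k + 1) s) i
  suffices hEq : x (k + 3) = RHS by rw [hEq]; exact hmem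
  have hne : u ^ d * v ≠ 0 :=
    mul_ne_zero (pow_ne_zero _ (hx.2.2.1 k)) (hx.2.2.1 (k + 1))
  apply mul_left_cancel₀ hne
  have hudw : ∀ t ≤ d, u ^ d * w ^ t = Rt ^ t * u ^ (d - t) := by
    intro t htle
    have h1 : u ^ d = u ^ t * u ^ (d - t) := by rw [← pow_add]; congr 1; omega
    calc u ^ d * w ^ t = (u * w) ^ t * u ^ (d - t) := by rw [h1, mul_pow]; ring
    _ = Rt ^ t * u ^ (d - t) := by rw [Fu]
  have L : u ^ d * v * x (k + 3)
      = ∑ t ∈ Finset.range (d + 1), φ K (Q.coeff t) * (Rt ^ t * u ^ (d - t)) := by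
    rw [mul_assoc, Fw, ev_expand, Finset.mul_sum]
    apply Finset.sum_congr rfl
    intro t ht
    have htle : t ≤ d := by have := Finset.mem_range.mp ht; omega
    calc u ^ d * (φ K (Q.coeff t) * w ^ t)
        = φ K (Q.coeff t) * (u ^ d * w ^ t) := by ring
      _ = φ K (Q.coeff t) * (Rt ^ t * u ^ (d - t)) := by rw [hudw t htle]
  rw [L]
  refine Eq.symm ?_
  -- now compute the right-hand side
  have Rz : u ^ d * v * zmon x k (d : ℤ) 1
      = (∑ t ∈ Finset.range (d + 1), φ K (Q.coeff t) * u ^ t) * Rt ^ d := by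
    have hz : zmon x k (d : ℤ) 1 = x (k - 1) ^ 1 * w ^ d := by
      have := zmon_pp (x := x) (k := k) d 1
      simpa using this
    rw [hz]
    calc u ^ d * v * (x (k - 1) ^ 1 * w ^ d)
        = (v * x (k - 1)) * ((u * w) ^ d) := by rw [mul_pow]; ring
      _ = (Q.eval₂ (φ K) u) * Rt ^ d := by rw [Fv, Fu]
      _ = _ := by rw [ev_expand]
  have Rsum : ∀ t ∈ Finset.range (d + 1),
      u ^ d * v * (φ K (Q.coeff t) * (zmon x k (t : ℤ) 0 * (Tt * ∑ i ∈ Finset.range (d - t), Rt ^ i)))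
      = φ K (Q.coeff t) * ((Rt - 1) * (∑ i ∈ Finset.range (d - t), Rt ^ i)
          * (Rt ^ t * u ^ (d - t))) := by
    intro t ht
    have htle : t ≤ d := by have := Finset.mem_range.mp ht; omega
    have hz : zmon x k (t : ℤ) 0 = w ^ t := by
      have := zmon_pp (x := x) (k := k) t 0
      simpa using this
    rw [hz]
    calc u ^ d * v * (φ K (Q.coeff t) * (w ^ t * (Tt * ∑ i ∈ Finset.range (d - t), Rt ^ i)))
        = φ K (Q.coeff t) * ((v * Tt) * (∑ i ∈ Finset.range (d - t), Rt ^ i) * (u ^ d * w ^ t)) := by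
          ring
      _ = _ := by rw [FT, hudw t htle]
  calc u ^ d * v * RHS
      = u ^ d * v * zmon x k (d : ℤ) 1
        - ∑ t ∈ Finset.range (d + 1), u ^ d * v
            * (φ K (Q.coeff t) * (zmon x k (t : ℤ) 0 * (Tt * ∑ i ∈ Finset.range (d - t), Rt ^ i))) := by
        rw [hRHS, mul_sub, Finset.mul_sum]
    _ = (∑ t ∈ Finset.range (d + 1), φ K (Q.coeff t) * u ^ t) * Rt ^ d
        - ∑ t ∈ Finset.range (d + 1), φ K (Q.coeff t)
            * ((Rt - 1) * (∑ i ∈ Finset.range (d - t), Rt ^ i) * (Rt ^ t * u ^ (d - t))) := by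
        rw [Rz, Finset.sum_congr rfl Rsum]
    _ = ∑ t ∈ Finset.range (d + 1), φ K (Q.coeff t) * (Rt ^ t * u ^ (d - t)) :=
        core_identity Q (Qp_palin hp1 hp2 k) u Rt

end Dev5
section Dev6

variable {K : Type*} [Field K] {P1 P2 : K[X]} {x : ℤ → F K} {k : ℤ}

lemma shift_down (hm1 : P1.Monic) (hm2 : P2.Monic) (hp1 : Palindromic P1)
    (hp2 : Palindromic P2) (hx : ClusterSeq P1 P2 x) :
    x (k - 2) ∈ SpanSet P1 P2 x k := by
  classical
  set Q := Qp P1 P2 k with hQ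
  set R := Qp P1 P2 (k + 1) with hR
  set e := R.natDegree with he
  set u := x k with hu
  set v := x (k + 1) with hv
  set w := x (k + 2) with hw
  set Qt : F K := Q.eval₂ (φ K) u with hQt
  set Tq : F K := (Q.divX).eval₂ (φ K) u with hTq
  have Fu : u * w = R.eval₂ (φ K) v := by
    have h := cluster_rel hx (k + 1)
    rw [show k + 1 + 1 = k + 2 from by ring, show k + 1 - 1 = k from by ring] at h
    rw [← hv, ← hw, ← hu, ← hR] at h
    rw [← h]; ring
  have Fd : u * x (k - 2) = R.eval₂ (φ K) (x (k - 1)) := by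
    have h := cluster_rel hx (k - 1)
    rw [show k - 1 + 1 = k from by ring, show k - 1 - 1 = k - 2 from by ring] at h
    have hqq : Qp P1 P2 (k - 1) = R := by
      rw [hR, show k + 1 = k - 1 + 2 from by ring, Qp_add_two]
    rw [hqq, ← hu] at h
    exact h
  have Fv : v * x (k - 1) = Qt := by
    have h := cluster_rel hx k
    rw [← hv, ← hu, ← hQ, ← hQt] at h
    exact h
  have FT : u * Tq = Qt - 1 := by
    have h0 : Q.coeff 0 = 1 := Qp_coeff_zero hm1 hm2 hp1 hp2 k
    have h2 := congrArg (Polynomial.eval₂ (φ K) u) (Polynomial.X_mul_divX_add (p := Q))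
    simp only [Polynomial.eval₂_add, Polynomial.eval₂_mul, Polynomial.eval₂_X,
      Polynomial.eval₂_C, h0, (φ K).map_one] at h2
    rw [← hTq, ← hQt] at h2
    rw [← h2]; ring
  set RHS : F K := zmon x k 1 e
    - ∑ s ∈ Finset.range (e + 1), φ K (R.coeff s)
        * (zmon x k 0 s * (Tq * ∑ i ∈ Finset.range (e - s), Qt ^ i)) with hRHS
  have hmem : RHS ∈ SpanSet P1 P2 x k := by
    apply SpanSet.sub (SpanSet.zmon_mem _ _)
    apply SpanSet.sum
    intro s _
    apply SpanSet.smul (Qp_coeff_mem P1 P2 (k + 1) s)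
    apply SpanSet.mul hx (SpanSet.zmon_mem _ _)
    apply SpanSet.mul hx
    · exact SpanSet.ev_u fun t => by
        rw [Polynomial.coeff_divX]; exact Qp_coeff_mem P1 P2 k _
    · exact SpanSet.sum _ _ fun i _ =>
        SpanSet.pow hx (SpanSet.ev_u fun t => Qp_coeff_mem P1 P2 k t) i
  suffices hEq : x (k - 2) = RHS by rw [hEq]; exact hmem
  have hne : v ^ e * u ≠ 0 :=
    mul_ne_zero (pow_ne_zero _ (hx.2.2.1 (k + 1))) (hx.2.2.1 k)
  apply mul_left_cancel₀ hne
  have hvdw : ∀ s ≤ e, v ^ e * x (k - 1) ^ s = Qt ^ s * v ^ (e - s) := by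
    intro s hsle
    have h1 : v ^ e = v ^ s * v ^ (e - s) := by rw [← pow_add]; congr 1; omega
    calc v ^ e * x (k - 1) ^ s = (v * x (k - 1)) ^ s * v ^ (e - s) := by
          rw [h1, mul_pow]; ring
      _ = Qt ^ s * v ^ (e - s) := by rw [Fv]
  have L : v ^ e * u * x (k - 2)
      = ∑ s ∈ Finset.range (e + 1), φ K (R.coeff s) * (Qt ^ s * v ^ (e - s)) := by
    rw [mul_assoc, Fd, ev_expand, Finset.mul_sum]
    apply Finset.sum_congr rfl
    intro s hs
    have hsle : s ≤ e := by have := Finset.mem_range.mp hs; omega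
    calc v ^ e * (φ K (R.coeff s) * x (k - 1) ^ s)
        = φ K (R.coeff s) * (v ^ e * x (k - 1) ^ s) := by ring
      _ = φ K (R.coeff s) * (Qt ^ s * v ^ (e - s)) := by rw [hvdw s hsle]
  rw [L]
  refine Eq.symm ?_
  have Rz : v ^ e * u * zmon x k 1 (e : ℤ)
      = (∑ s ∈ Finset.range (e + 1), φ K (R.coeff s) * v ^ s) * Qt ^ e := by
    have hz : zmon x k 1 (e : ℤ) = x (k - 1) ^ e * w ^ 1 := by
      have := zmon_pp (x := x) (k := k) 1 e
      simpa using this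
    rw [hz]
    calc v ^ e * u * (x (k - 1) ^ e * w ^ 1)
        = ((v * x (k - 1)) ^ e) * (u * w) := by rw [mul_pow]; ring
      _ = Qt ^ e * R.eval₂ (φ K) v := by rw [Fv, Fu]
      _ = _ := by rw [ev_expand]; ring
  have Rsum : ∀ s ∈ Finset.range (e + 1),
      v ^ e * u * (φ K (R.coeff s) * (zmon x k 0 (s : ℤ) * (Tq * ∑ i ∈ Finset.range (e - s), Qt ^ i)))
      = φ K (R.coeff s) * ((Qt - 1) * (∑ i ∈ Finset.range (e - s), Qt ^ i)
          * (Qt ^ s * v ^ (e - s))) := by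
    intro s hs
    have hsle : s ≤ e := by have := Finset.mem_range.mp hs; omega
    have hz : zmon x k 0 (s : ℤ) = x (k - 1) ^ s := by
      have := zmon_pp (x := x) (k := k) 0 s
      simpa using this
    rw [hz]
    calc v ^ e * u * (φ K (R.coeff s) * (x (k - 1) ^ s * (Tq * ∑ i ∈ Finset.range (e - s), Qt ^ i)))
        = φ K (R.coeff s) * ((u * Tq) * (∑ i ∈ Finset.range (e - s), Qt ^ i)
            * (v ^ e * x (k - 1) ^ s)) := by ring
      _ = _ := by rw [FT, hvdw s hsle]
  calc v ^ e * u * RHS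
      = v ^ e * u * zmon x k 1 (e : ℤ)
        - ∑ s ∈ Finset.range (e + 1), v ^ e * u
            * (φ K (R.coeff s) * (zmon x k 0 (s : ℤ) * (Tq * ∑ i ∈ Finset.range (e - s), Qt ^ i))) := by
        rw [hRHS]
        rw [mul_sub, Finset.mul_sum]
    _ = (∑ s ∈ Finset.range (e + 1), φ K (R.coeff s) * v ^ s) * Qt ^ e
        - ∑ s ∈ Finset.range (e + 1), φ K (R.coeff s)
            * ((Qt - 1) * (∑ i ∈ Finset.range (e - s), Qt ^ i) * (Qt ^ s * v ^ (e - s))) := by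
        rw [Rz, Finset.sum_congr rfl Rsum]
    _ = ∑ s ∈ Finset.range (e + 1), φ K (R.coeff s) * (Qt ^ s * v ^ (e - s)) :=
        core_identity R (Qp_palin hp1 hp2 (k + 1)) v Qt

end Dev6
section Dev7

variable {K : Type*} [Field K] {P1 P2 : K[X]} {x : ℤ → F K} {k : ℤ}

lemma x_km1_mem : x (k - 1) ∈ SpanSet P1 P2 x k := by
  have h := zmon_pp (x := x) (k := k) 0 1
  push_cast at h
  have : x (k - 1) = zmon x k 0 1 := by rw [h]; simp
  rw [this]; exact SpanSet.zmon_mem _ _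

lemma x_k_mem : x k ∈ SpanSet P1 P2 x k := by
  have h := zmon_nn (x := x) (k := k) 1 0
  push_cast at h
  rw [neg_zero] at h
  have : x k = zmon x k (-1) 0 := by rw [h]; simp
  rw [this]; exact SpanSet.zmon_mem _ _

lemma x_kp1_mem : x (k + 1) ∈ SpanSet P1 P2 x k := by
  have h := zmon_nn (x := x) (k := k) 0 1
  push_cast at h
  rw [neg_zero] at h
  have : x (k + 1) = zmon x k 0 (-1) := by rw [h]; simp
  rw [this]; exact SpanSet.zmon_mem _ _

lemma x_kp2_mem : x (k + 2) ∈ SpanSet P1 P2 x k := by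
  have h := zmon_pp (x := x) (k := k) 1 0
  push_cast at h
  have : x (k + 2) = zmon x k 1 0 := by rw [h]; simp
  rw [this]; exact SpanSet.zmon_mem _ _

variable (hm1 : P1.Monic) (hm2 : P2.Monic) (hp1 : Palindromic P1)
    (hp2 : Palindromic P2) (hx : ClusterSeq P1 P2 x)

include hm1 hm2 hp1 hp2 hx in
lemma span_succ : SpanSet P1 P2 x (k + 1) ⊆ SpanSet P1 P2 x k := by
  rintro y ⟨s, c, hc, hc0, rfl⟩
  apply SpanSet.sum
  intro m _
  apply SpanSet.smul (hc m)
  unfold zmon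
  rw [show k + 1 - 1 = k from by ring, show k + 1 + 1 = k + 2 from by ring,
    show k + 1 + 2 = k + 3 from by ring]
  exact SpanSet.mul hx (SpanSet.mul hx (SpanSet.mul hx
    (SpanSet.pow hx x_k_mem _) (SpanSet.pow hx x_kp1_mem _))
    (SpanSet.pow hx x_kp2_mem _))
    (SpanSet.pow hx (shift_up hm1 hm2 hp1 hp2 hx) _)

include hm1 hm2 hp1 hp2 hx in
lemma span_pred : SpanSet P1 P2 x (k - 1) ⊆ SpanSet P1 P2 x k := by
  rintro y ⟨s, c, hc, hc0, rfl⟩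
  apply SpanSet.sum
  intro m _
  apply SpanSet.smul (hc m)
  unfold zmon
  rw [show k - 1 - 1 = k - 2 from by ring, show k - 1 + 1 = k from by ring,
    show k - 1 + 2 = k + 1 from by ring]
  exact SpanSet.mul hx (SpanSet.mul hx (SpanSet.mul hx
    (SpanSet.pow hx (shift_down hm1 hm2 hp1 hp2 hx) _) (SpanSet.pow hx x_km1_mem _))
    (SpanSet.pow hx x_k_mem _))
    (SpanSet.pow hx x_kp1_mem _)

include hm1 hm2 hp1 hp2 hx in
lemma span_shift (n : ℕ) :
    SpanSet P1 P2 x (k + n) ⊆ SpanSet P1 P2 x k ∧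
    SpanSet P1 P2 x (k - n) ⊆ SpanSet P1 P2 x k := by
  induction n with
  | zero => simp
  | succ n ih =>
    constructor
    · rw [show (k + (n + 1 : ℕ) : ℤ) = (k + n) + 1 from by push_cast; ring]
      exact subset_trans (span_succ hm1 hm2 hp1 hp2 hx) ih.1
    · rw [show (k - (n + 1 : ℕ) : ℤ) = (k - n) - 1 from by push_cast; ring]
      exact subset_trans (span_pred hm1 hm2 hp1 hp2 hx) ih.2

include hm1 hm2 hp1 hp2 hx in
lemma x_all_mem (m : ℤ) : x m ∈ SpanSet P1 P2 x k := by
  have hself : x m ∈ SpanSet P1 P2 x m := x_k_mem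
  rcases le_total k m with h | h
  · have : m = k + (m - k).toNat := by omega
    exact (span_shift hm1 hm2 hp1 hp2 hx ((m - k).toNat)).1 (by rw [← this]; exact hself)
  · have : m = k - (k - m).toNat := by omega
    exact (span_shift hm1 hm2 hp1 hp2 hx ((k - m).toNat)).2 (by rw [← this]; exact hself)

include hm1 hm2 hp1 hp2 hx in
lemma clA_subset_span : (clA P1 P2 x : Set (F K)) ⊆ SpanSet P1 P2 x k := by
  let Ssub : Subring (F K) :=
    { carrier := SpanSet P1 P2 x k
      one_mem' := SpanSet.one
      mul_mem' := fun ha hb => SpanSet.mul hx ha hb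
      zero_mem' := SpanSet.zero
      add_mem' := fun ha hb => SpanSet.add ha hb
      neg_mem' := fun ha => SpanSet.neg ha }
  have : clA P1 P2 x ≤ Ssub := by
    apply Subring.closure_le.mpr
    rintro y (⟨r, hr, rfl⟩ | ⟨m, rfl⟩)
    · have : φ K r = φ K r * 1 := by ring
      rw [this]
      exact SpanSet.smul hr SpanSet.one
    · exact x_all_mem hm1 hm2 hp1 hp2 hx m
  exact this

end Dev7
section Dev8

variable {K : Type*} [Field K] {P1 P2 : K[X]} {x : ℤ → F K} {k : ℤ}

lemma spanset_finsupp {y : F K} (h : y ∈ SpanSet P1 P2 x k) :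
    ∃ c : ℤ × ℤ →₀ K, (∀ m, c m ∈ uK P1 P2) ∧
      y = ∑ m ∈ c.support, φ K (c m) * zmon x k m.1 m.2 := by
  classical
  obtain ⟨s, c, hc, hc0, rfl⟩ := h
  refine ⟨Finsupp.onFinset s c (fun a ha => by by_contra hns; exact ha (hc0 a hns)),
    fun m => hc m, ?_⟩
  refine (Finset.sum_subset Finsupp.support_onFinset_subset ?_).symm
  intro m hms hmnot
  have : c m = 0 := by
    rwa [Finsupp.notMem_support_iff, Finsupp.onFinset_apply] at hmnot
  simp [this]

end Dev8
section Dev9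

variable {K : Type*} [Field K]

/-- Evaluation of a two-variable polynomial (inner variable ↦ `a`, outer ↦ `b`). -/
def Ee (a b : F K) : Polynomial (Polynomial K) →+* F K :=
  Polynomial.eval₂RingHom (Polynomial.eval₂RingHom (φ K) a) b

lemma Ee_C_C (a b : F K) (r : K) : Ee a b (Polynomial.C (Polynomial.C r)) = φ K r := by
  simp [Ee]

lemma Ee_C (a b : F K) (p : K[X]) : Ee a b (Polynomial.C p) = p.eval₂ (φ K) a := by
  simp [Ee]

lemma Ee_X (a b : F K) : Ee a b Polynomial.X = b := by simp [Ee]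

lemma Ee_CX (a b : F K) : Ee a b (Polynomial.C Polynomial.X) = a := by simp [Ee]

/-- Base case: evaluation at `(x 1, x 2)` is injective. -/
lemma Ee_injective_base {P1 P2 : K[X]} {x : ℤ → F K} (hx : ClusterSeq P1 P2 x) :
    Function.Injective (Ee (x 1) (x 2)) := by
  classical
  set ψ : Polynomial (Polynomial K) →+* MvPolynomial (Fin 2) K :=
    Polynomial.eval₂RingHom
      (Polynomial.eval₂RingHom (MvPolynomial.C) (MvPolynomial.X 0)) (MvPolynomial.X 1)
    with hψ
  set χ : MvPolynomial (Fin 2) K →+* Polynomial (Polynomial K) :=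
    (MvPolynomial.eval₂Hom (Polynomial.C.comp Polynomial.C)
      (fun i => if i = 0 then Polynomial.C Polynomial.X else Polynomial.X)) with hχ
  have hcomp : χ.comp ψ = RingHom.id _ := by
    apply Polynomial.ringHom_ext'
    · apply Polynomial.ringHom_ext'
      · ext r
        simp [hψ, hχ]
      · simp [hψ, hχ]
    · simp [hψ, hχ]
  have hψinj : Function.Injective ψ := by
    intro p q h
    have := congrArg χ h
    rw [← RingHom.comp_apply, ← RingHom.comp_apply, hcomp, RingHom.id_apply,
      RingHom.id_apply] at this
    exact this
  have hEe : Ee (x 1) (x 2)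
      = (algebraMap (MvPolynomial (Fin 2) K) (F K)).comp ψ := by
    apply Polynomial.ringHom_ext'
    · apply Polynomial.ringHom_ext'
      · ext r
        simp [Ee, hψ, φ]
      · have h1 : x 1 = Xv K 0 := hx.1
        simp [Ee, hψ, Xv, h1]
    · have h2 : x 2 = Xv K 1 := hx.2.1
      simp [Ee, hψ, Xv, h2]
  rw [hEe]
  exact (IsFractionRing.injective (MvPolynomial (Fin 2) K) (F K)).comp hψinj

end Dev9
section Dev10

variable {K : Type*} [Field K]

lemma Ee_mapC (a b : F K) (p : K[X]) :
    Ee a b (Polynomial.map Polynomial.C p) = p.eval₂ (φ K) b := by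
  unfold Ee
  rw [Polynomial.coe_eval₂RingHom, Polynomial.eval₂_map]
  congr 1
  ext r
  simp

lemma Ee_apply (a b : F K) (f : Polynomial (Polynomial K)) :
    Ee a b f = ∑ j ∈ Finset.range (f.natDegree + 1),
      (f.coeff j).eval₂ (φ K) a * b ^ j := by
  unfold Ee
  rw [Polynomial.coe_eval₂RingHom, Polynomial.eval₂_eq_sum_range]
  apply Finset.sum_congr rfl
  intro j _
  rw [Polynomial.coe_eval₂RingHom]

lemma Ee_step_up {a b c : F K} (hinj : Function.Injective (Ee a b))
    (R : K[X]) (hR : R ≠ 0) (hrel : a * c = R.eval₂ (φ K) b) :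
    Function.Injective (Ee b c) := by
  classical
  rw [injective_iff_map_eq_zero] at hinj ⊢
  intro f hf
  set N := f.natDegree with hN
  set g : Polynomial (Polynomial K) := ∑ j ∈ Finset.range (N + 1),
    Polynomial.map Polynomial.C (f.coeff j * R ^ j)
      * Polynomial.C (Polynomial.X ^ (N - j)) with hg
  have claim1 : Ee a b g = a ^ N * Ee b c f := by
    rw [hg, map_sum, Ee_apply b c f, Finset.mul_sum]
    apply Finset.sum_congr rfl
    intro j hj
    have hjle : j ≤ N := by have := Finset.mem_range.mp hj; omega
    rw [map_mul, Ee_mapC, Ee_C]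
    rw [Polynomial.eval₂_mul, Polynomial.eval₂_pow, Polynomial.eval₂_pow,
      Polynomial.eval₂_X, ← hrel]
    have hsplit : a ^ N = a ^ j * a ^ (N - j) := by rw [← pow_add]; congr 1; omega
    rw [hsplit, mul_pow]; ring
  have hg0 : g = 0 := by
    apply hinj
    rw [claim1, hf, mul_zero]
  have hcoeff : ∀ j ≤ N, f.coeff j * R ^ j = 0 := by
    intro j0 hj0
    apply Polynomial.ext
    intro m
    have h1 := congrArg (fun p : Polynomial (Polynomial K) => (p.coeff m).coeff (N - j0)) hg0
    simp only [hg, Polynomial.finset_sum_coeff, Polynomial.coeff_mul_C,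
      Polynomial.coeff_map, Polynomial.coeff_zero] at h1
    have h2 : ∀ j ∈ Finset.range (N + 1), j ≠ j0 →
        (Polynomial.C ((f.coeff j * R ^ j).coeff m) * Polynomial.X ^ (N - j)).coeff (N - j0)
          = 0 := by
      intro j hj hne
      have hjle : j ≤ N := by have := Finset.mem_range.mp hj; omega
      rw [Polynomial.coeff_C_mul, Polynomial.coeff_X_pow, if_neg (by omega), mul_zero]
    rw [Finset.sum_eq_single_of_mem j0 (Finset.mem_range.mpr (by omega)) h2,
      Polynomial.coeff_C_mul, Polynomial.coeff_X_pow, if_pos rfl, mul_one] at h1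
    simpa using h1
  have hfj : ∀ j, f.coeff j = 0 := by
    intro j
    by_cases hj : j ≤ N
    · rcases mul_eq_zero.mp (hcoeff j hj) with h | h
      · exact h
      · exact absurd (pow_eq_zero_iff'.mp h).1 hR
    · exact Polynomial.coeff_eq_zero_of_natDegree_lt (by omega)
  exact Polynomial.ext hfj

lemma Ee_step_down {a b c : F K} (hinj : Function.Injective (Ee b c))
    (S : K[X]) (hS : S ≠ 0) (hrel : a * c = S.eval₂ (φ K) b) :
    Function.Injective (Ee a b) := by
  classical
  rw [injective_iff_map_eq_zero] at hinj ⊢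
  intro f hf
  set N := f.natDegree with hN
  set M := (Finset.range (N + 1)).sup (fun j => (f.coeff j).natDegree) with hM
  have hMle : ∀ j ≤ N, (f.coeff j).natDegree ≤ M := fun j hj =>
    Finset.le_sup (f := fun j => (f.coeff j).natDegree) (Finset.mem_range.mpr (by omega))
  set h : Polynomial (Polynomial K) := ∑ j ∈ Finset.range (N + 1),
    ∑ i ∈ Finset.range (M + 1),
      Polynomial.C (Polynomial.C ((f.coeff j).coeff i) * S ^ i * Polynomial.X ^ j)
        * Polynomial.X ^ (M - i) with hh
  have claim1 : Ee b c h = c ^ M * Ee a b f := by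
    rw [hh, map_sum, Ee_apply a b f, Finset.mul_sum]
    apply Finset.sum_congr rfl
    intro j hj
    have hjle : j ≤ N := by have := Finset.mem_range.mp hj; omega
    have hexp : (f.coeff j).eval₂ (φ K) a
        = ∑ i ∈ Finset.range (M + 1), φ K ((f.coeff j).coeff i) * a ^ i :=
      Polynomial.eval₂_eq_sum_range' (φ K) (by have := hMle j hjle; omega) a
    rw [map_sum, hexp, Finset.sum_mul, Finset.mul_sum]
    apply Finset.sum_congr rfl
    intro i hi
    have hile : i ≤ M := by have := Finset.mem_range.mp hi; omega
    rw [map_mul, Ee_C, map_pow, Ee_X]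
    rw [Polynomial.eval₂_mul, Polynomial.eval₂_mul, Polynomial.eval₂_C,
      Polynomial.eval₂_pow, Polynomial.eval₂_pow, Polynomial.eval₂_X, ← hrel]
    have hsplit : c ^ M = c ^ i * c ^ (M - i) := by rw [← pow_add]; congr 1; omega
    rw [hsplit, mul_pow]; ring
  have hh0 : h = 0 := by
    apply hinj
    rw [claim1, hf, mul_zero]
  have hcoeff : ∀ i0 ≤ M, ∀ j0, (f.coeff j0).coeff i0 = 0 := by
    intro i0 hi0 j0
    have h1 := congrArg (fun p : Polynomial (Polynomial K) => p.coeff (M - i0)) hh0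
    simp only [hh, Polynomial.finset_sum_coeff, Polynomial.coeff_zero] at h1
    have h2 : ∀ j ∈ Finset.range (N + 1),
        ∑ i ∈ Finset.range (M + 1),
          (Polynomial.C (Polynomial.C ((f.coeff j).coeff i) * S ^ i * Polynomial.X ^ j)
            * Polynomial.X ^ (M - i)).coeff (M - i0)
        = Polynomial.C ((f.coeff j).coeff i0) * S ^ i0 * Polynomial.X ^ j := by
      intro j hj
      rw [Finset.sum_eq_single_of_mem i0 (Finset.mem_range.mpr (by omega))]
      · rw [Polynomial.coeff_C_mul, Polynomial.coeff_X_pow, if_pos rfl, mul_one]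
      · intro i hi hne
        have hile : i ≤ M := by have := Finset.mem_range.mp hi; omega
        rw [Polynomial.coeff_C_mul, Polynomial.coeff_X_pow, if_neg (by omega), mul_zero]
    rw [Finset.sum_congr rfl h2] at h1
    have h3 : ∑ j ∈ Finset.range (N + 1),
        Polynomial.C ((f.coeff j).coeff i0) * S ^ i0 * Polynomial.X ^ j
        = S ^ i0 * ∑ j ∈ Finset.range (N + 1),
            Polynomial.C ((f.coeff j).coeff i0) * Polynomial.X ^ j := by
      rw [Finset.mul_sum]
      apply Finset.sum_congr rfl
      intro j _; ring
    rw [h3] at h1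
    have hS0 : (S : K[X]) ^ i0 ≠ 0 := pow_ne_zero _ hS
    have h4 : ∑ j ∈ Finset.range (N + 1),
        Polynomial.C ((f.coeff j).coeff i0) * Polynomial.X ^ j = 0 :=
      (mul_eq_zero.mp h1).resolve_left hS0
    by_cases hj0 : j0 ≤ N
    · have h5 := congrArg (fun p : K[X] => p.coeff j0) h4
      simp only [Polynomial.finset_sum_coeff, Polynomial.coeff_zero] at h5
      rw [Finset.sum_eq_single_of_mem j0 (Finset.mem_range.mpr (by omega))] at h5
      · rwa [Polynomial.coeff_C_mul, Polynomial.coeff_X_pow, if_pos rfl, mul_one] at h5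
      · intro j hj hne
        rw [Polynomial.coeff_C_mul, Polynomial.coeff_X_pow, if_neg (by omega), mul_zero]
    · rw [Polynomial.coeff_eq_zero_of_natDegree_lt (n := j0) (by omega),
        Polynomial.coeff_zero]
  have hfj : ∀ j, f.coeff j = 0 := by
    intro j
    apply Polynomial.ext
    intro i
    by_cases hi : i ≤ M
    · simpa using hcoeff i hi j
    · by_cases hj : j ≤ N
      · exact Polynomial.coeff_eq_zero_of_natDegree_lt (by have := hMle j hj; omega)
      · rw [Polynomial.coeff_eq_zero_of_natDegree_lt (n := j) (by omega),
          Polynomial.coeff_zero]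
  exact Polynomial.ext hfj

end Dev10
section Dev11

variable {K : Type*} [Field K] {P1 P2 : K[X]} {x : ℤ → F K}

lemma Ee_injective_all (hm1 : P1.Monic) (hm2 : P2.Monic) (hx : ClusterSeq P1 P2 x)
    (k : ℤ) : Function.Injective (Ee (x k) (x (k + 1))) := by
  have hrel : ∀ j : ℤ, x j * x (j + 2) = (Qp P1 P2 (j + 1)).eval₂ (φ K) (x (j + 1)) := by
    intro j
    have h := cluster_rel hx (j + 1)
    rw [show j + 1 + 1 = j + 2 from by ring, show j + 1 - 1 = j from by ring] at h
    rw [← h]; ring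
  have hQne : ∀ j : ℤ, Qp P1 P2 j ≠ 0 := fun j => (Qp_monic hm1 hm2 j).ne_zero
  have hup : ∀ j : ℤ, Function.Injective (Ee (x j) (x (j + 1)))
      → Function.Injective (Ee (x (j + 1)) (x (j + 2))) := by
    intro j hinj
    exact Ee_step_up hinj (Qp P1 P2 (j + 1)) (hQne (j + 1)) (hrel j)
  have hdown : ∀ j : ℤ, Function.Injective (Ee (x (j + 1)) (x (j + 2)))
      → Function.Injective (Ee (x j) (x (j + 1))) := by
    intro j hinj
    exact Ee_step_down hinj (Qp P1 P2 (j + 1)) (hQne (j + 1)) (hrel j)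
  have base : Function.Injective (Ee (x 1) (x (1 + 1))) := by
    rw [show (1 + 1 : ℤ) = 2 from by ring]
    exact Ee_injective_base hx
  induction k using Int.induction_on with
  | zero =>
    apply hdown 0
    rw [show (0 + 1 : ℤ) = 1 from by ring, show (0 + 2 : ℤ) = 1 + 1 from by ring]
    exact base
  | succ i ih =>
    have := hup i ih
    rwa [show ((i : ℤ) + 2) = (i : ℤ) + 1 + 1 from by ring] at this
  | pred i ih =>
    apply hdown (-(i : ℤ) - 1)
    rwa [show (-(i : ℤ) - 1 + 1) = -(i : ℤ) from by ring,
      show (-(i : ℤ) - 1 + 2) = -(i : ℤ) + 1 from by ring]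

end Dev11
section Dev12

variable {K : Type*} [Field K] {P1 P2 : K[X]} {x : ℤ → F K}

lemma coeff_zero_pow (p : K[X]) (n : ℕ) : (p ^ n).coeff 0 = p.coeff 0 ^ n := by
  simp [Polynomial.coeff_zero_eq_eval_zero, Polynomial.eval_pow]

lemma E1 (hx : ClusterSeq P1 P2 x) (k a1 a2 : ℤ) :
    (Qp P1 P2 k).eval₂ (φ K) (x k) ^ (max a2 0).toNat
      * (Qp P1 P2 (k + 1)).eval₂ (φ K) (x (k + 1)) ^ (max a1 0).toNat
      * x k ^ (max (-a1) 0).toNat * x (k + 1) ^ (max (-a2) 0).toNat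
    = zmon x k a1 a2 * x (k + 1) ^ (max a2 0).toNat * x k ^ (max a1 0).toNat := by
  have Fv : x (k + 1) * x (k - 1) = (Qp P1 P2 k).eval₂ (φ K) (x k) := cluster_rel hx k
  have Fu : x k * x (k + 2) = (Qp P1 P2 (k + 1)).eval₂ (φ K) (x (k + 1)) := by
    have h := cluster_rel hx (k + 1)
    rw [show k + 1 + 1 = k + 2 from by ring, show k + 1 - 1 = k from by ring] at h
    rw [← h]; ring
  rw [← Fv, ← Fu]
  unfold zmon
  rw [mul_pow, mul_pow]; ring

lemma independence (hm1 : P1.Monic) (hm2 : P2.Monic)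
    (hp1 : Palindromic P1) (hp2 : Palindromic P2)
    (hx : ClusterSeq P1 P2 x) (k : ℤ) :
    ∀ c : ℤ × ℤ →₀ K, (∀ m, c m ∈ uK P1 P2) →
      ∑ m ∈ c.support, φ K (c m) * zmon x k m.1 m.2 = 0 → c = 0 := by
  classical
  intro c _ hsum
  by_contra hne
  have hsupp : c.support.Nonempty := Finsupp.support_nonempty_iff.mpr hne
  set Q := Qp P1 P2 k with hQdef
  set R := Qp P1 P2 (k + 1) with hRdef
  have hQ0 : Q.coeff 0 = 1 := Qp_coeff_zero hm1 hm2 hp1 hp2 k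
  have hR0 : R.coeff 0 = 1 := Qp_coeff_zero hm1 hm2 hp1 hp2 (k + 1)
  set N : ℕ := c.support.sup (fun m => m.1.natAbs ⊔ m.2.natAbs) with hNdef
  have hNb : ∀ m ∈ c.support, m.1.natAbs ≤ N ∧ m.2.natAbs ≤ N := by
    intro m hm
    have h : m.1.natAbs ⊔ m.2.natAbs ≤ N :=
      Finset.le_sup (f := fun m : ℤ × ℤ => m.1.natAbs ⊔ m.2.natAbs) hm
    omega
  set astar : ℤ := c.support.sup' hsupp (fun m => m.1) with hadef
  have hsupp2 : (c.support.filter (fun m => m.1 = astar)).Nonempty := by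
    obtain ⟨m, hm, hval⟩ := Finset.exists_mem_eq_sup' hsupp (fun m => m.1)
    exact ⟨m, Finset.mem_filter.mpr ⟨hm, hval.symm⟩⟩
  set bstar : ℤ := (c.support.filter (fun m => m.1 = astar)).sup' hsupp2 (fun m => m.2)
    with hbdef
  obtain ⟨mstar, hmstar, hmval⟩ := Finset.exists_mem_eq_sup' hsupp2 (fun m => m.2)
  have hmstar_supp : mstar ∈ c.support := (Finset.mem_filter.mp hmstar).1
  have hmstar1 : mstar.1 = astar := (Finset.mem_filter.mp hmstar).2
  have hmstar2 : mstar.2 = bstar := hmval.symm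
  have hle1 : ∀ m ∈ c.support, m.1 ≤ astar := fun m hm => Finset.le_sup' _ hm
  have hle2 : ∀ m ∈ c.support, m.1 = astar → m.2 ≤ bstar := fun m hm h1 =>
    Finset.le_sup' (f := fun m => m.2) (Finset.mem_filter.mpr ⟨hm, h1⟩)
  have hastarN : astar.natAbs ≤ N := by rw [← hmstar1]; exact (hNb mstar hmstar_supp).1
  have hbstarN : bstar.natAbs ≤ N := by rw [← hmstar2]; exact (hNb mstar hmstar_supp).2
  set G : ℤ × ℤ → Polynomial (Polynomial K) := fun m =>
    Polynomial.C (Polynomial.C (c m)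
        * (Polynomial.X ^ ((N : ℤ) - m.1).toNat * Q ^ (max m.2 0).toNat))
      * Polynomial.map Polynomial.C (R ^ (max m.1 0).toNat)
      * Polynomial.X ^ ((N : ℤ) - m.2).toNat with hGdef
  have hEeG : ∀ m ∈ c.support, Ee (x k) (x (k + 1)) (G m)
      = φ K (c m) * (x k ^ N * x (k + 1) ^ N * zmon x k m.1 m.2) := by
    intro m hm
    obtain ⟨h1N, h2N⟩ := hNb m hm
    simp only [hGdef, map_mul, map_pow, Ee_C, Ee_X, Ee_mapC, Polynomial.eval₂_mul,
      Polynomial.eval₂_C, Polynomial.eval₂_pow, Polynomial.eval₂_X]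
    have hkey : x k ^ ((N : ℤ) - m.1).toNat
          * ((Q : K[X]).eval₂ (φ K) (x k)) ^ (max m.2 0).toNat
          * ((R : K[X]).eval₂ (φ K) (x (k + 1))) ^ (max m.1 0).toNat
          * x (k + 1) ^ ((N : ℤ) - m.2).toNat
        = x k ^ N * x (k + 1) ^ N * zmon x k m.1 m.2 := by
      apply mul_right_cancel₀
        (b := x k ^ (max (-m.1) 0).toNat * x (k + 1) ^ (max (-m.2) 0).toNat)
        (mul_ne_zero (pow_ne_zero _ (hx.2.2.1 k)) (pow_ne_zero _ (hx.2.2.1 (k + 1))))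
      have hpow1 : (max m.1 0).toNat + ((N : ℤ) - m.1).toNat
          = N + (max (-m.1) 0).toNat := by omega
      have hpow2 : (max m.2 0).toNat + ((N : ℤ) - m.2).toNat
          = N + (max (-m.2) 0).toNat := by omega
      have hE1 := E1 hx k m.1 m.2
      rw [← hQdef, ← hRdef] at hE1
      calc x k ^ ((N : ℤ) - m.1).toNat
            * ((Q : K[X]).eval₂ (φ K) (x k)) ^ (max m.2 0).toNat
            * ((R : K[X]).eval₂ (φ K) (x (k + 1))) ^ (max m.1 0).toNat
            * x (k + 1) ^ ((N : ℤ) - m.2).toNat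
            * (x k ^ (max (-m.1) 0).toNat * x (k + 1) ^ (max (-m.2) 0).toNat)
          = ((Q : K[X]).eval₂ (φ K) (x k) ^ (max m.2 0).toNat
              * (R : K[X]).eval₂ (φ K) (x (k + 1)) ^ (max m.1 0).toNat
              * x k ^ (max (-m.1) 0).toNat * x (k + 1) ^ (max (-m.2) 0).toNat)
            * (x k ^ ((N : ℤ) - m.1).toNat * x (k + 1) ^ ((N : ℤ) - m.2).toNat) := by
            ring
        _ = (zmon x k m.1 m.2 * x (k + 1) ^ (max m.2 0).toNat * x k ^ (max m.1 0).toNat)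
            * (x k ^ ((N : ℤ) - m.1).toNat * x (k + 1) ^ ((N : ℤ) - m.2).toNat) := by
            rw [hE1]
        _ = zmon x k m.1 m.2
            * (x k ^ ((max m.1 0).toNat + ((N : ℤ) - m.1).toNat))
            * (x (k + 1) ^ ((max m.2 0).toNat + ((N : ℤ) - m.2).toNat)) := by
            rw [pow_add, pow_add]; ring
        _ = zmon x k m.1 m.2 * (x k ^ (N + (max (-m.1) 0).toNat))
            * (x (k + 1) ^ (N + (max (-m.2) 0).toNat)) := by rw [hpow1, hpow2]
        _ = x k ^ N * x (k + 1) ^ N * zmon x k m.1 m.2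
            * (x k ^ (max (-m.1) 0).toNat * x (k + 1) ^ (max (-m.2) 0).toNat) := by
            rw [pow_add, pow_add]; ring
    rw [← hkey]; ring
  set GG : Polynomial (Polynomial K) := ∑ m ∈ c.support, G m with hGGdef
  have hGG0 : GG = 0 := by
    apply Ee_injective_all hm1 hm2 hx k
    rw [map_zero, hGGdef, map_sum, Finset.sum_congr rfl hEeG]
    calc ∑ m ∈ c.support, φ K (c m) * (x k ^ N * x (k + 1) ^ N * zmon x k m.1 m.2)
        = x k ^ N * x (k + 1) ^ N
          * ∑ m ∈ c.support, φ K (c m) * zmon x k m.1 m.2 := by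
          rw [Finset.mul_sum]
          exact Finset.sum_congr rfl fun m _ => by ring
      _ = 0 := by rw [hsum, mul_zero]
  set ca : ℕ := ((N : ℤ) - astar).toNat with hcadef
  set cb : ℕ := ((N : ℤ) - bstar).toNat with hcbdef
  have hext := congrArg (fun p : Polynomial (Polynomial K) => (p.coeff cb).coeff ca) hGG0
  simp only [hGGdef, Polynomial.finset_sum_coeff, Polynomial.coeff_zero] at hext
  have hterm : ∀ m ∈ c.support, m ≠ mstar → (((G m).coeff cb).coeff ca) = 0 := by
    intro m hm hmne
    obtain ⟨h1N, h2N⟩ := hNb m hm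
    have hma : m.1 < astar ∨ (m.1 = astar ∧ m.2 < bstar) := by
      rcases lt_or_eq_of_le (hle1 m hm) with h | h
      · exact Or.inl h
      · refine Or.inr ⟨h, ?_⟩
        rcases lt_or_eq_of_le (hle2 m hm h) with h' | h'
        · exact h'
        · exfalso
          apply hmne
          have hm1 : m = (astar, bstar) := Prod.ext h h'
          have hm2 : mstar = (astar, bstar) := Prod.ext hmstar1 hmstar2
          rw [hm1, hm2]
    simp only [hGdef]
    rw [Polynomial.coeff_mul_X_pow']
    by_cases hcb2 : ((N : ℤ) - m.2).toNat ≤ cb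
    · rcases hma with hma | ⟨hma1, hma2⟩
      · rw [if_pos hcb2, Polynomial.coeff_C_mul, Polynomial.coeff_map,
          Polynomial.coeff_mul_C, Polynomial.coeff_C_mul,
          mul_comm (Polynomial.X ^ ((N : ℤ) - m.1).toNat) (Q ^ (max m.2 0).toNat),
          Polynomial.coeff_mul_X_pow']
        rw [if_neg (by omega)]
        ring
      · exact absurd hcb2 (by omega)
    · rw [if_neg hcb2, Polynomial.coeff_zero]
  have hterm_star : (((G mstar).coeff cb).coeff ca) = c mstar := by
    simp only [hGdef]
    have hnb : ((N : ℤ) - mstar.2).toNat = cb := by rw [hmstar2]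
    have hna : ((N : ℤ) - mstar.1).toNat = ca := by rw [hmstar1]
    rw [hnb, hna, Polynomial.coeff_mul_X_pow', if_pos le_rfl, Nat.sub_self,
      Polynomial.coeff_C_mul, Polynomial.coeff_map, coeff_zero_pow, hR0, one_pow,
      Polynomial.coeff_mul_C, Polynomial.coeff_C_mul,
      mul_comm (Polynomial.X ^ ca) (Q ^ (max mstar.2 0).toNat),
      Polynomial.coeff_mul_X_pow', if_pos le_rfl, Nat.sub_self, coeff_zero_pow, hQ0,
      one_pow]
    simp
  rw [Finset.sum_eq_single_of_mem mstar hmstar_supp hterm, hterm_star] at hext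
  exact (Finsupp.mem_support_iff.mp hmstar_supp) hext

end Dev12
/-- For each `k`, the standard monomials `z_k[a1,a2]`, `(a1,a2) ∈ ℤ²`, form an
`underline-K`-basis of `A(P1,P2)`: they are linearly independent over `underline-K`
and span `A(P1,P2)` over `underline-K`. -/
theorem standard_monomial_basis {K : Type*} [Field K] [CharZero K] (P1 P2 : K[X])
    (hm1 : P1.Monic) (hm2 : P2.Monic) (hp1 : Palindromic P1) (hp2 : Palindromic P2)
    (x : ℤ → F K) (hx : ClusterSeq P1 P2 x) (k : ℤ) :
    (∀ c : ℤ × ℤ →₀ K, (∀ m, c m ∈ uK P1 P2) →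
        ∑ m ∈ c.support, φ K (c m) * zmon x k m.1 m.2 = 0 → c = 0) ∧
    (∀ y ∈ clA P1 P2 x, ∃ c : ℤ × ℤ →₀ K, (∀ m, c m ∈ uK P1 P2) ∧
        y = ∑ m ∈ c.support, φ K (c m) * zmon x k m.1 m.2) := by
  constructor
  · exact independence hm1 hm2 hp1 hp2 hx k
  · intro y hy
    exact spanset_finsupp (clA_subset_span hm1 hm2 hp1 hp2 hx hy)

end GCA
end
end

section
/- (a) If a1 > 0, the height of the horizontal edge h_j of the maximal Dyck path D_{a1,a2} is ⌊(j−1)·a2/a1⌋ for 1 ≤ j ≤ a1, and consequently for 1 ≤ i < j ≤ a1 the number of vertical edges in the subpath from h_i to h_j equals ⌊(j−1)·a2/a1⌋ − ⌊(i−1)·a2/a1⌋. (b) If a2 > 0, the depth of the vertical edge v_j is ⌈j·a1/a2⌉ for 1 ≤ j ≤ a2, and consequently for 1 ≤ i < j ≤ a2 the number of horizontal edges in the subpath from v_i to v_j equals ⌈j·a1/a2⌉ − ⌈i·a1/a2⌉. -/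
noncomputable section

/-- `p : ℕ → ℕ × ℕ` describes the maximal Dyck path `D_{a,b}`: it starts at `(0,0)`,
ends at `(a,b)`, takes unit East or North steps, never goes above the main diagonal
of the rectangle, and is closest to the diagonal: every lattice point strictly above
the path is strictly above the diagonal. -/
def IsMaxDyckPath (a b : ℕ) (p : ℕ → ℕ × ℕ) : Prop :=
  p 0 = (0, 0) ∧ p (a + b) = (a, b) ∧
  (∀ t < a + b, p (t + 1) = ((p t).1 + 1, (p t).2) ∨ p (t + 1) = ((p t).1, (p t).2 + 1)) ∧
  (∀ t ≤ a + b, a * (p t).2 ≤ b * (p t).1) ∧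
  (∀ x y : ℕ, x ≤ a → (∀ t ≤ a + b, (p t).1 = x → (p t).2 < y) → b * x < a * y)

/-- **Heights and depths of the edges of a maximal Dyck path.**
(a) If `a1 > 0`, the height of the `j`-th horizontal edge (the East step taking the
first coordinate from `j-1` to `j`) is `⌊(j-1)·a2/a1⌋`, and for `1 ≤ i < j ≤ a1` the
number of vertical edges in the subpath from `h_i` to `h_j` is
`⌊(j-1)·a2/a1⌋ − ⌊(i-1)·a2/a1⌋`.
(b) If `a2 > 0`, the depth of the `j`-th vertical edge is `⌈j·a1/a2⌉`, and for
`1 ≤ i < j ≤ a2` the number of horizontal edges in the subpath from `v_i` to `v_j`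
is `⌈j·a1/a2⌉ − ⌈i·a1/a2⌉`. -/
theorem maxDyckPath_height_depth (a1 a2 : ℕ) (p : ℕ → ℕ × ℕ)
    (hp : IsMaxDyckPath a1 a2 p) :
    (0 < a1 → ∀ j, 1 ≤ j → j ≤ a1 → ∀ t < a1 + a2,
      (p (t + 1)).1 = (p t).1 + 1 → (p t).1 = j - 1 →
      (p t).2 = (j - 1) * a2 / a1) ∧
    (0 < a1 → ∀ i j ti tj, 1 ≤ i → i < j → j ≤ a1 → ti < a1 + a2 → tj < a1 + a2 →
      (p (ti + 1)).1 = (p ti).1 + 1 → (p ti).1 = i - 1 →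
      (p (tj + 1)).1 = (p tj).1 + 1 → (p tj).1 = j - 1 →
      ((Finset.Ico ti tj).filter fun t => (p (t + 1)).2 = (p t).2 + 1).card
        = (j - 1) * a2 / a1 - (i - 1) * a2 / a1) ∧
    (0 < a2 → ∀ j, 1 ≤ j → j ≤ a2 → ∀ t < a1 + a2,
      (p (t + 1)).2 = (p t).2 + 1 → (p t).2 = j - 1 →
      (p t).1 = (j * a1 + a2 - 1) / a2) ∧
    (0 < a2 → ∀ i j ti tj, 1 ≤ i → i < j → j ≤ a2 → ti < a1 + a2 → tj < a1 + a2 →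
      (p (ti + 1)).2 = (p ti).2 + 1 → (p ti).2 = i - 1 →
      (p (tj + 1)).2 = (p tj).2 + 1 → (p tj).2 = j - 1 →
      ((Finset.Ico ti tj).filter fun t => (p (t + 1)).1 = (p t).1 + 1).card
        = (j * a1 + a2 - 1) / a2 - (i * a1 + a2 - 1) / a2) := by
  obtain ⟨h0, hend, hstep, hdiag, hclose⟩ := hp
  -- each step increments exactly one coordinate
  have hstep1 : ∀ t < a1 + a2,
      ((p (t + 1)).1 = (p t).1 + 1 ∧ (p (t + 1)).2 = (p t).2) ∨
      ((p (t + 1)).1 = (p t).1 ∧ (p (t + 1)).2 = (p t).2 + 1) := by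
    intro t ht
    rcases hstep t ht with h | h
    · left; rw [h]; exact ⟨rfl, rfl⟩
    · right; rw [h]; exact ⟨rfl, rfl⟩
  have hmono1 : ∀ s t, s ≤ t → t ≤ a1 + a2 → (p s).1 ≤ (p t).1 := by
    intro s t hst ht
    induction t with
    | zero =>
      have : s = 0 := by omega
      rw [this]
    | succ n ih =>
      rcases Nat.eq_or_lt_of_le hst with h | h
      · rw [h]
      · have h1 := ih (by omega) (by omega)
        rcases hstep1 n (by omega) with ⟨h2, _⟩ | ⟨h2, _⟩ <;> omega
  have hmono2 : ∀ s t, s ≤ t → t ≤ a1 + a2 → (p s).2 ≤ (p t).2 := by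
    intro s t hst ht
    induction t with
    | zero =>
      have : s = 0 := by omega
      rw [this]
    | succ n ih =>
      rcases Nat.eq_or_lt_of_le hst with h | h
      · rw [h]
      · have h1 := ih (by omega) (by omega)
        rcases hstep1 n (by omega) with ⟨_, h2⟩ | ⟨_, h2⟩ <;> omega
  have hxle : ∀ t ≤ a1 + a2, (p t).1 ≤ a1 := by
    intro t ht
    have := hmono1 t (a1 + a2) ht le_rfl
    rw [hend] at this
    exact this
  -- height formula at an East step
  have heightA : 0 < a1 → ∀ t < a1 + a2, (p (t + 1)).1 = (p t).1 + 1 →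
      (p t).2 = (p t).1 * a2 / a1 := by
    intro ha t ht hE
    have hub : (p t).2 ≤ (p t).1 * a2 / a1 := by
      rw [Nat.le_div_iff_mul_le ha]
      have := hdiag t (le_of_lt ht)
      nlinarith
    have hlb : (p t).1 * a2 / a1 ≤ (p t).2 := by
      by_contra hc
      push_neg at hc
      have hcol : ∀ s ≤ a1 + a2, (p s).1 = (p t).1 → (p s).2 < (p t).1 * a2 / a1 := by
        intro s hs hsx
        have hst : s ≤ t := by
          by_contra h
          push_neg at h
          have := hmono1 (t + 1) s h hs
          omega
        have := hmono2 s t hst (le_of_lt ht)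
        omega
      have h1 := hclose (p t).1 ((p t).1 * a2 / a1) (hxle t (le_of_lt ht)) hcol
      have h2 := Nat.div_mul_le_self ((p t).1 * a2) a1
      nlinarith
    omega
  -- depth formula at a North step
  have hN1 : ∀ t < a1 + a2, (p (t + 1)).2 = (p t).2 + 1 → (p (t + 1)).1 = (p t).1 := by
    intro t ht h
    rcases hstep1 t ht with ⟨h1, h2⟩ | ⟨h1, h2⟩ <;> omega
  have depthB : 0 < a2 → ∀ t < a1 + a2, (p (t + 1)).2 = (p t).2 + 1 →
      (p t).1 = (((p t).2 + 1) * a1 + a2 - 1) / a2 := by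
    intro hb t ht hN
    have hx1 := hN1 t ht hN
    have hd := hdiag (t + 1) ht
    rw [hN, hx1] at hd
    -- hd : a1 * ((p t).2 + 1) ≤ a2 * (p t).1
    have hlb : (((p t).2 + 1) * a1 + a2 - 1) / a2 ≤ (p t).1 := by
      rw [Nat.div_le_iff_le_mul_add_pred hb]
      have hc : ((p t).2 + 1) * a1 = a1 * ((p t).2 + 1) := Nat.mul_comm _ _
      omega
    have hub : (p t).1 ≤ (((p t).2 + 1) * a1 + a2 - 1) / a2 := by
      rcases Nat.eq_zero_or_pos (p t).1 with h | h
      · rw [h]; exact Nat.zero_le _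
      · have hcol : ∀ s ≤ a1 + a2, (p s).1 = (p t).1 - 1 → (p s).2 < (p t).2 + 1 := by
          intro s hs hsx
          have hst : s ≤ t := by
            by_contra hcon
            push_neg at hcon
            have h1 := hmono1 (t + 1) s hcon hs
            omega
          have := hmono2 s t hst (le_of_lt ht)
          omega
        have h1 := hclose ((p t).1 - 1) ((p t).2 + 1)
          (by have := hxle t (le_of_lt ht); omega) hcol
        -- h1 : a2 * ((p t).1 - 1) < a1 * ((p t).2 + 1)
        rw [Nat.le_div_iff_mul_le hb]
        have h2 : a2 * ((p t).1 - 1) + a2 = a2 * (p t).1 := by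
          have : (p t).1 - 1 + 1 = (p t).1 := by omega
          calc a2 * ((p t).1 - 1) + a2 = a2 * ((p t).1 - 1 + 1) := by ring
          _ = a2 * (p t).1 := by rw [this]
        have hc1 : (p t).1 * a2 = a2 * (p t).1 := Nat.mul_comm _ _
        have hc2 : ((p t).2 + 1) * a1 = a1 * ((p t).2 + 1) := Nat.mul_comm _ _
        omega
    omega
  -- telescoping counts
  have hcardN : ∀ s u, s ≤ u → u ≤ a1 + a2 →
      ((Finset.Ico s u).filter fun t => (p (t + 1)).2 = (p t).2 + 1).card
        = (p u).2 - (p s).2 := by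
    intro s u hsu hu
    induction u with
    | zero =>
      have : s = 0 := by omega
      subst this
      simp
    | succ n ih =>
      rcases Nat.eq_or_lt_of_le hsu with h | h
      · rw [h]; simp
      · have hsn : s ≤ n := by omega
        have hrec := ih hsn (by omega)
        rw [Nat.Ico_succ_right_eq_insert_Ico hsn, Finset.filter_insert]
        have hys := hmono2 s n hsn (by omega)
        rcases hstep1 n (by omega) with ⟨h1, h2⟩ | ⟨h1, h2⟩
        · rw [if_neg (by omega)]
          rw [hrec]
          omega
        · rw [if_pos h2, Finset.card_insert_of_notMem (by simp)]
          rw [hrec]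
          omega
  have hcardE : ∀ s u, s ≤ u → u ≤ a1 + a2 →
      ((Finset.Ico s u).filter fun t => (p (t + 1)).1 = (p t).1 + 1).card
        = (p u).1 - (p s).1 := by
    intro s u hsu hu
    induction u with
    | zero =>
      have : s = 0 := by omega
      subst this
      simp
    | succ n ih =>
      rcases Nat.eq_or_lt_of_le hsu with h | h
      · rw [h]; simp
      · have hsn : s ≤ n := by omega
        have hrec := ih hsn (by omega)
        rw [Nat.Ico_succ_right_eq_insert_Ico hsn, Finset.filter_insert]
        have hys := hmono1 s n hsn (by omega)
        rcases hstep1 n (by omega) with ⟨h1, h2⟩ | ⟨h1, h2⟩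
        · rw [if_pos h1, Finset.card_insert_of_notMem (by simp)]
          rw [hrec]
          omega
        · rw [if_neg (by omega)]
          rw [hrec]
          omega
  refine ⟨?_, ?_, ?_, ?_⟩
  · intro ha j hj1 hj2 t ht hE hx
    rw [heightA ha t ht hE, hx]
  · intro ha i j ti tj hi hij hj hti htj hEi hxi hEj hxj
    have htij : ti ≤ tj := by
      by_contra h
      push_neg at h
      have := hmono1 tj ti (by omega) (by omega)
      omega
    rw [hcardN ti tj htij (le_of_lt htj)]
    rw [heightA ha ti hti hEi, heightA ha tj htj hEj, hxi, hxj]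
  · intro hb j hj1 hj2 t ht hN hy
    have hthis := depthB hb t ht hN
    rw [hy] at hthis
    have e : j - 1 + 1 = j := by omega
    rw [e] at hthis
    exact hthis
  · intro hb i j ti tj hi hij hj hti htj hNi hyi hNj hyj
    have htij : ti ≤ tj := by
      by_contra h
      push_neg at h
      have := hmono2 tj ti (by omega) (by omega)
      omega
    rw [hcardE ti tj htij (le_of_lt htj)]
    have d1 := depthB hb ti hti hNi
    have d2 := depthB hb tj htj hNj
    rw [hyi] at d1
    rw [hyj] at d2
    rw [d1, d2]
    have e1 : i - 1 + 1 = i := by omega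
    have e2 : j - 1 + 1 = j := by omega
    rw [e1, e2]
end
end

section
/- Let a1, a2 > 0, let h ∈ D1 be a horizontal edge of the maximal Dyck path D_{a1,a2} and let v_j ∈ D2 be a vertical edge lying to the right of/above h (h precedes v_j along the path from (0,0) to (a1,a2)). Then a1·(|(h v_j)_2| − 1) < a2·|(h v_j)_1|, where (h v_j)_1 and (h v_j)_2 are the sets of horizontal and vertical edges of the subpath of D from h to v_j inclusive. -/
open scoped Classical
noncomputable section

namespace Dyck

/-- The edges of the maximal Dyck path `D_{a,b}`: `a` horizontal edges
`h_1, …, h_a` (0-indexed here) and `b` vertical edges `v_1, …, v_b`. -/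
abbrev Edge (a b : ℕ) := Fin a ⊕ Fin b

/-- The height of the horizontal edge `h_{j+1}` of `D_{a,b}` is `⌊j·b/a⌋`. -/
def ht (a b : ℕ) (j : Fin a) : ℕ := j.1 * b / a

/-- The depth of the vertical edge `v_{j+1}` of `D_{a,b}` is `⌈(j+1)·a/b⌉`. -/
def dep (a b : ℕ) (j : Fin b) : ℕ := ((j.1 + 1) * a + b - 1) / b

/-- The position (0-indexed) of an edge along the maximal Dyck path `D_{a,b}`:
a horizontal edge `h_{j+1}` is preceded by `j` horizontal edges and by `ht j`
vertical edges; a vertical edge `v_{j+1}` is preceded by `j` vertical edges and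
by `dep j` horizontal edges. -/
def pos (a b : ℕ) : Edge a b → ℕ
  | Sum.inl j => j.1 + ht a b j
  | Sum.inr j => j.1 + dep a b j

/-- Cyclic distance from `e` to `f` along the closed loop `D_{a,b}`
(the endpoints `(0,0)` and `(a,b)` are identified). -/
def dd (a b : ℕ) (e f : Edge a b) : ℕ := (pos a b f + (a + b) - pos a b e) % (a + b)

/-- The (cyclic) subpath of `D_{a,b}` from `e` to `f`, both included. -/
def subpath (a b : ℕ) (e f : Edge a b) : Finset (Edge a b) :=
  Finset.univ.filter fun g => dd a b e g ≤ dd a b e f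

/-- The number of horizontal edges in a set of edges. -/
def hcount (a b : ℕ) (s : Finset (Edge a b)) : ℕ := (s.filter fun e => e.isLeft = true).card

/-- The number of vertical edges in a set of edges. -/
def vcount (a b : ℕ) (s : Finset (Edge a b)) : ℕ := (s.filter fun e => e.isRight = true).card

/-- The sum of a horizontal grading over the horizontal edges of a set of edges. -/
def hsum (a b : ℕ) (S1 : Fin a → ℕ) (s : Finset (Edge a b)) : ℕ :=
  ∑ e ∈ s, Sum.elim S1 (fun _ => 0) e

/-- The sum of a vertical grading over the vertical edges of a set of edges. -/
def vsum (a b : ℕ) (S2 : Fin b → ℕ) (s : Finset (Edge a b)) : ℕ :=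
  ∑ e ∈ s, Sum.elim (fun _ => 0) S2 e

/-- The horizontal shadow statistic `f_{S1}` of a set of edges. -/
def fH (a b : ℕ) (S1 : Fin a → ℕ) (s : Finset (Edge a b)) : ℤ :=
  (hsum a b S1 s : ℤ) - (vcount a b s : ℤ)

/-- The vertical shadow statistic `f_{S2}` of a set of edges. -/
def fV (a b : ℕ) (S2 : Fin b → ℕ) (s : Finset (Edge a b)) : ℤ :=
  (vsum a b S2 s : ℤ) - (hcount a b s : ℤ)

/-- Horizontal grading condition (HGC) for the pair `(h, v)`: there is an edge `e`
with `he` a proper subpath of `hv` and `|(he)_2| = Σ_{h' ∈ (he)_1} S1(h')`. -/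
def HGC (a b : ℕ) (S1 : Fin a → ℕ) (h : Fin a) (v : Fin b) : Prop :=
  ∃ e : Edge a b, dd a b (.inl h) e < dd a b (.inl h) (.inr v) ∧
    vcount a b (subpath a b (.inl h) e) = hsum a b S1 (subpath a b (.inl h) e)

/-- Vertical grading condition (VGC) for the pair `(h, v)`: there is an edge `e`
with `ev` a proper subpath of `hv` and `|(ev)_1| = Σ_{v' ∈ (ev)_2} S2(v')`. -/
def VGC (a b : ℕ) (S2 : Fin b → ℕ) (h : Fin a) (v : Fin b) : Prop :=
  ∃ e : Edge a b, 0 < dd a b (.inl h) e ∧ dd a b (.inl h) e ≤ dd a b (.inl h) (.inr v) ∧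
    hcount a b (subpath a b e (.inr v)) = vsum a b S2 (subpath a b e (.inr v))

/-- A pair of gradings `(S1, S2)` on `D_{a,b}` is compatible. -/
def Compatible (a b : ℕ) (S1 : Fin a → ℕ) (S2 : Fin b → ℕ) : Prop :=
  ∀ (h : Fin a) (v : Fin b), HGC a b S1 h v ∨ VGC a b S2 h v

/-- `e` is a "balanced" endpoint for the horizontal edge `h`:
`|(he)_2| = Σ_{h' ∈ (he)_1} S1(h')`. -/
def balH (a b : ℕ) (S1 : Fin a → ℕ) (h : Fin a) (e : Edge a b) : Prop :=
  vcount a b (subpath a b (.inl h) e) = hsum a b S1 (subpath a b (.inl h) e)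

/-- The local shadow `sh(h; S1)`: the vertical edges of the shortest balanced
subpath starting at `h` (all of `D2` if there is none). -/
def shH (a b : ℕ) (S1 : Fin a → ℕ) (h : Fin a) : Finset (Fin b) :=
  Finset.univ.filter fun v =>
    ∀ e : Edge a b, balH a b S1 h e → dd a b (.inl h) (.inr v) ≤ dd a b (.inl h) e

/-- The shadow `sh(S1) = ⋃_h sh(h; S1)`. -/
def shadowH (a b : ℕ) (S1 : Fin a → ℕ) : Finset (Fin b) :=
  Finset.univ.filter fun v => ∃ h : Fin a, v ∈ shH a b S1 h

/-- The vertical edges removed from `sh(S1)` to form the remote shadow: for each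
`d ∈ [1,a]`, the (up to) `S1(h_d)` vertical edges of depth `d` immediately
following `h_d`. -/
def removedH (a b : ℕ) (S1 : Fin a → ℕ) : Finset (Fin b) :=
  Finset.univ.filter fun v => ∃ hd : Fin a, hd.1 + 1 = dep a b v ∧
    (Finset.univ.filter fun v' : Fin b => dep a b v' = dep a b v ∧ v'.1 < v.1).card < S1 hd

/-- The remote shadow `rsh(S1)`. -/
def rshH (a b : ℕ) (S1 : Fin a → ℕ) : Finset (Fin b) :=
  shadowH a b S1 \ removedH a b S1

/-- `e` is a "balanced" starting point for the vertical edge `v`: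
`|(ev)_1| = Σ_{v' ∈ (ev)_2} S2(v')`. -/
def balV (a b : ℕ) (S2 : Fin b → ℕ) (e : Edge a b) (v : Fin b) : Prop :=
  hcount a b (subpath a b e (.inr v)) = vsum a b S2 (subpath a b e (.inr v))

/-- The local shadow `sh(v; S2)`: the horizontal edges of the shortest balanced
subpath ending at `v` (all of `D1` if there is none). -/
def shV (a b : ℕ) (S2 : Fin b → ℕ) (v : Fin b) : Finset (Fin a) :=
  Finset.univ.filter fun h =>
    ∀ e : Edge a b, balV a b S2 e v → dd a b (.inl h) (.inr v) ≤ dd a b e (.inr v)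

/-- The shadow `sh(S2) = ⋃_v sh(v; S2)`. -/
def shadowV (a b : ℕ) (S2 : Fin b → ℕ) : Finset (Fin a) :=
  Finset.univ.filter fun h => ∃ v : Fin b, h ∈ shV a b S2 v

/-- The horizontal edges removed from `sh(S2)` to form the remote shadow: for each
`ℓ ∈ [1,b]`, the (up to) `S2(v_ℓ)` horizontal edges of height `ℓ−1` immediately
preceding `v_ℓ`. -/
def removedV (a b : ℕ) (S2 : Fin b → ℕ) : Finset (Fin a) :=
  Finset.univ.filter fun h => ∃ vl : Fin b, vl.1 = ht a b h ∧
    (Finset.univ.filter fun h' : Fin a => ht a b h' = ht a b h ∧ h.1 < h'.1).card < S2 vl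

/-- The remote shadow `rsh(S2)`. -/
def rshV (a b : ℕ) (S2 : Fin b → ℕ) : Finset (Fin a) :=
  shadowV a b S2 \ removedV a b S2

/-- The support of a grading. -/
def suppH (a : ℕ) (S1 : Fin a → ℕ) : Finset (Fin a) := Finset.univ.filter fun h => S1 h ≠ 0
def suppV (b : ℕ) (S2 : Fin b → ℕ) : Finset (Fin b) := Finset.univ.filter fun v => S2 v ≠ 0

/-- Auxiliary: `n < (n / k + 1) * k` for `k > 0`. -/
lemma lt_div_succ_mul (n k : ℕ) (hk : 0 < k) : n < (n / k + 1) * k := by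
  have h1 := Nat.div_add_mod n k
  have h2 := Nat.mod_lt n hk
  have h3 : (n / k + 1) * k = k * (n / k) + k := by ring
  omega

lemma dep_le (a b : ℕ) (hb : 0 < b) (j : Fin b) : dep a b j ≤ a := by
  have h1 : (j.1 + 1) * a ≤ b * a := Nat.mul_le_mul_right a j.2
  have h2 : (j.1 + 1) * a + b - 1 < (a + 1) * b := by
    have h3 : (a + 1) * b = b * a + b := by ring
    omega
  have h4 := (Nat.div_lt_iff_lt_mul hb).mpr h2
  unfold dep
  omega

lemma pos_lt (a b : ℕ) (ha : 0 < a) (hb : 0 < b) (e : Edge a b) : pos a b e < a + b := by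
  cases e with
  | inl j =>
    have h1 : j.1 * b < b * a := by
      have h2 : j.1 * b < a * b := (Nat.mul_lt_mul_right hb).mpr j.2
      have h3 : a * b = b * a := by ring
      omega
    have h4 : ht a b j < b := by
      unfold ht
      exact (Nat.div_lt_iff_lt_mul ha).mpr h1
    have h5 := j.2
    simp only [pos]
    omega
  | inr j =>
    have h1 := dep_le a b hb j
    have h2 := j.2
    simp only [pos]
    omega

lemma dd_eq_sub (a b : ℕ) (e f : Edge a b) (h1 : pos a b e ≤ pos a b f)
    (h2 : pos a b f < a + b) : dd a b e f = pos a b f - pos a b e := by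
  unfold dd
  have h3 : pos a b f + (a + b) - pos a b e = (a + b) + (pos a b f - pos a b e) := by omega
  rw [h3, Nat.add_mod_left, Nat.mod_eq_of_lt (by omega)]

lemma dd_le_iff (a b : ℕ) (ha : 0 < a) (hb : 0 < b) (e f g : Edge a b)
    (hef : pos a b e ≤ pos a b f) :
    (dd a b e g ≤ dd a b e f ↔ (pos a b e ≤ pos a b g ∧ pos a b g ≤ pos a b f)) := by
  have hf := pos_lt a b ha hb f
  have hg := pos_lt a b ha hb g
  have he := pos_lt a b ha hb e
  rw [dd_eq_sub a b e f hef hf]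
  rcases le_or_gt (pos a b e) (pos a b g) with hc | hc
  · rw [dd_eq_sub a b e g hc hg]
    omega
  · unfold dd
    rw [Nat.mod_eq_of_lt (by omega)]
    omega


/-- **Slope bound.** For a horizontal edge `h` preceding a vertical edge `v` along
the maximal Dyck path `D_{a1,a2}`, we have `a1·(|(hv)_2| − 1) < a2·|(hv)_1|`. -/
theorem slope_bound (a1 a2 : ℕ) (ha1 : 0 < a1) (ha2 : 0 < a2)
    (h : Fin a1) (v : Fin a2)
    (hprec : pos a1 a2 (Sum.inl h) < pos a1 a2 (Sum.inr v)) :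
    (a1 : ℤ) * ((vcount a1 a2 (subpath a1 a2 (Sum.inl h) (Sum.inr v)) : ℤ) - 1)
      < (a2 : ℤ) * (hcount a1 a2 (subpath a1 a2 (Sum.inl h) (Sum.inr v)) : ℤ) := by
  classical
  set t := ht a1 a2 h with hts
  set d := dep a1 a2 v with hds
  -- division facts
  have F0 : t * a1 ≤ h.1 * a2 := Nat.div_mul_le_self _ _
  have F1 : h.1 * a2 < (t + 1) * a1 := lt_div_succ_mul _ _ ha1
  have F2 : (v.1 + 1) * a1 ≤ d * a2 := by
    have h3 := lt_div_succ_mul ((v.1 + 1) * a1 + a2 - 1) a2 ha2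
    have h4 : (((v.1 + 1) * a1 + a2 - 1) / a2 + 1) * a2 = d * a2 + a2 := by
      rw [hds]; unfold dep; ring
    have h5 : 1 ≤ (v.1 + 1) * a1 := Nat.one_le_iff_ne_zero.mpr (by positivity)
    omega
  have F3 : d * a2 ≤ (v.1 + 1) * a1 + a2 - 1 := by
    have := Nat.div_mul_le_self ((v.1 + 1) * a1 + a2 - 1) a2
    rw [hds]; unfold dep; exact this
  have hdle : d ≤ a1 := dep_le a1 a2 ha2 v
  have hPQ : pos a1 a2 (Sum.inl h) ≤ pos a1 a2 (Sum.inr v) := le_of_lt hprec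
  have hmem : ∀ g : Edge a1 a2, (g ∈ subpath a1 a2 (Sum.inl h) (Sum.inr v)) ↔
      (pos a1 a2 (Sum.inl h) ≤ pos a1 a2 g ∧ pos a1 a2 g ≤ pos a1 a2 (Sum.inr v)) := by
    intro g
    simp only [subpath, Finset.mem_filter, Finset.mem_univ, true_and]
    exact dd_le_iff a1 a2 ha1 ha2 _ _ g hPQ
  have hposh : pos a1 a2 (Sum.inl h) = h.1 + t := rfl
  have hposv : pos a1 a2 (Sum.inr v) = v.1 + d := rfl
  -- characterization of horizontal edges in the subpath
  have hcharL : ∀ j : Fin a1, ((Sum.inl j : Edge a1 a2) ∈ subpath a1 a2 (Sum.inl h) (Sum.inr v))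
      ↔ (h.1 ≤ j.1 ∧ j.1 < d) := by
    intro j
    rw [hmem]
    have hposj : pos a1 a2 (Sum.inl j) = j.1 + ht a1 a2 j := rfl
    constructor
    · rintro ⟨hl, hr⟩
      constructor
      · by_contra hc
        push_neg at hc
        have hmono : ht a1 a2 j ≤ t := by
          rw [hts]; unfold ht
          exact Nat.div_le_div_right (Nat.mul_le_mul_right a2 (le_of_lt hc))
        rw [hposj, hposh] at hl
        omega
      · by_contra hc
        push_neg at hc
        have h6 : d * a2 ≤ j.1 * a2 := Nat.mul_le_mul_right a2 hc
        have h7 : (v.1 + 1) * a1 ≤ j.1 * a2 := le_trans F2 h6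
        have h8 : v.1 + 1 ≤ ht a1 a2 j := by
          unfold ht
          exact (Nat.le_div_iff_mul_le ha1).mpr h7
        rw [hposj, hposv] at hr
        omega
    · rintro ⟨hl, hr⟩
      have hmono : t ≤ ht a1 a2 j := by
        rw [hts]; unfold ht
        exact Nat.div_le_div_right (Nat.mul_le_mul_right a2 hl)
      have h6 : j.1 * a2 ≤ (d - 1) * a2 := Nat.mul_le_mul_right a2 (by omega)
      have h7 : (d - 1) * a2 < (v.1 + 1) * a1 := by
        have h8 : (d - 1) * a2 + a2 = d * a2 := by
          have : d - 1 + 1 = d := by omega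
          calc (d - 1) * a2 + a2 = (d - 1 + 1) * a2 := by ring
            _ = d * a2 := by rw [this]
        have h5 : 1 ≤ (v.1 + 1) * a1 := Nat.one_le_iff_ne_zero.mpr (by positivity)
        omega
      have h9 : ht a1 a2 j ≤ v.1 := by
        have h10 : ht a1 a2 j < v.1 + 1 := by
          unfold ht
          exact (Nat.div_lt_iff_lt_mul ha1).mpr (lt_of_le_of_lt h6 h7)
        omega
      rw [hposj, hposh, hposv]
      omega
  -- characterization of vertical edges in the subpath
  have hcharR : ∀ j : Fin a2, ((Sum.inr j : Edge a1 a2) ∈ subpath a1 a2 (Sum.inl h) (Sum.inr v))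
      ↔ (t ≤ j.1 ∧ j.1 ≤ v.1) := by
    intro j
    rw [hmem]
    have hposj : pos a1 a2 (Sum.inr j) = j.1 + dep a1 a2 j := rfl
    constructor
    · rintro ⟨hl, hr⟩
      constructor
      · by_contra hc
        push_neg at hc
        have h6 : (j.1 + 1) * a1 ≤ t * a1 := Nat.mul_le_mul_right a1 hc
        have h7 : (j.1 + 1) * a1 ≤ h.1 * a2 := le_trans h6 F0
        have h8 : dep a1 a2 j ≤ h.1 := by
          have h9 : (j.1 + 1) * a1 + a2 - 1 < (h.1 + 1) * a2 := by
            have h10 : (h.1 + 1) * a2 = h.1 * a2 + a2 := by ring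
            omega
          have h11 : dep a1 a2 j < h.1 + 1 := by
            unfold dep
            exact (Nat.div_lt_iff_lt_mul ha2).mpr h9
          omega
        rw [hposj, hposh] at hl
        omega
      · by_contra hc
        push_neg at hc
        have hmono : d ≤ dep a1 a2 j := by
          rw [hds]; unfold dep
          refine Nat.div_le_div_right ?_
          have h20 : (v.1 + 1) * a1 ≤ (j.1 + 1) * a1 := Nat.mul_le_mul_right a1 (by omega)
          omega
        rw [hposj, hposv] at hr
        omega
    · rintro ⟨hl, hr⟩
      have hmono : dep a1 a2 j ≤ d := by
        rw [hds]; unfold dep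
        refine Nat.div_le_div_right ?_
        have : (j.1 + 1) * a1 ≤ (v.1 + 1) * a1 := Nat.mul_le_mul_right a1 (by omega)
        omega
      have h6 : h.1 < dep a1 a2 j := by
        have h7 : t * a1 ≤ j.1 * a1 := Nat.mul_le_mul_right a1 hl
        have h8 : h.1 * a2 < (j.1 + 1) * a1 := by
          have h9 : (t + 1) * a1 = t * a1 + a1 := by ring
          have h10 : (j.1 + 1) * a1 = j.1 * a1 + a1 := by ring
          omega
        have h11 : h.1 + 1 ≤ dep a1 a2 j := by
          unfold dep
          refine (Nat.le_div_iff_mul_le ha2).mpr ?_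
          have h12 : (h.1 + 1) * a2 = h.1 * a2 + a2 := by ring
          omega
        omega
      rw [hposj, hposh, hposv]
      omega
  -- compute the two counts
  have hboundH : ∀ m ∈ Finset.Ico h.1 d, m < a1 :=
    fun m hm => lt_of_lt_of_le (Finset.mem_Ico.mp hm).2 hdle
  have hboundV : ∀ m ∈ Finset.Ico t (v.1 + 1), m < a2 :=
    fun m hm => lt_of_lt_of_le (Finset.mem_Ico.mp hm).2 v.2
  have cardH : hcount a1 a2 (subpath a1 a2 (Sum.inl h) (Sum.inr v)) = d - h.1 := by
    have hset : (subpath a1 a2 (Sum.inl h) (Sum.inr v)).filter (fun e => e.isLeft = true)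
        = ((Finset.Ico h.1 d).attachFin hboundH).map ⟨Sum.inl, Sum.inl_injective⟩ := by
      ext g
      cases g with
      | inl j =>
        simp only [Finset.mem_filter, Sum.isLeft_inl, and_true, Finset.mem_map,
          Function.Embedding.coeFn_mk, Finset.mem_attachFin, Finset.mem_Ico, Sum.inl.injEq]
        rw [hcharL j]
        constructor
        · intro hj; exact ⟨j, hj, rfl⟩
        · rintro ⟨x, hx, rfl⟩; exact hx
      | inr j =>
        simp
    rw [hcount, hset, Finset.card_map, Finset.card_attachFin, Nat.card_Ico]
  have cardV : vcount a1 a2 (subpath a1 a2 (Sum.inl h) (Sum.inr v)) = v.1 + 1 - t := by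
    have hset : (subpath a1 a2 (Sum.inl h) (Sum.inr v)).filter (fun e => e.isRight = true)
        = ((Finset.Ico t (v.1 + 1)).attachFin hboundV).map ⟨Sum.inr, Sum.inr_injective⟩ := by
      ext g
      cases g with
      | inr j =>
        simp only [Finset.mem_filter, Sum.isRight_inr, and_true, Finset.mem_map,
          Function.Embedding.coeFn_mk, Finset.mem_attachFin, Finset.mem_Ico, Sum.inr.injEq]
        rw [hcharR j]
        constructor
        · intro hj; exact ⟨j, by omega, rfl⟩
        · rintro ⟨x, hx, rfl⟩; omega
      | inl j =>
        simp
    rw [vcount, hset, Finset.card_map, Finset.card_attachFin, Nat.card_Ico]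
  -- endpoints are in the subpath
  have hhd : h.1 < d := by
    have := (hcharL h).mp ((hmem _).mpr ⟨le_refl _, hPQ⟩)
    exact this.2
  have htv : t ≤ v.1 := by
    have := (hcharR v).mp ((hmem _).mpr ⟨hPQ, le_refl _⟩)
    exact this.1
  -- final arithmetic
  rw [cardH, cardV]
  have G1 : (h.1 : ℤ) * a2 < (t + 1) * a1 := by exact_mod_cast F1
  have G2 : ((v.1 : ℤ) + 1) * a1 ≤ d * a2 := by exact_mod_cast F2
  rw [Nat.cast_sub (by omega : t ≤ v.1 + 1), Nat.cast_sub (le_of_lt hhd)]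
  push_cast
  nlinarith [G1, G2]


end Dyck
end
end
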